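/- arXiv:1807.02491 — 4 statements merged into one kernel-verified Lean document; each statement's English description precedes it below -/
import Mathlib

section
/- Let A be a skew PBW extension of a ring R with variables x_1, …, x_n. Then for every 1 ≤ i ≤ n there exist an injective ring endomorphism σ_i : R → R and a σ_i-derivation δ_i : R → R (an additive map satisfying δ_i(rs) = σ_i(r)δ_i(s) + δ_i(r)s for all r, s ∈ R) such that x_i r = σ_i(r) x_i + δ_i(r) for every r ∈ R. -/
/-- The standard monomial `x^α = x₁^{α₁} ⋯ xₙ^{αₙ}` (ordered product). -/
def stdMon {A : Type*} [Ring A] {n : ℕ} (x : Fin n → A) (α : Fin n → ℕ) : A :=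
  (List.ofFn fun i => x i ^ α i).prod

/-- `A` is a skew PBW extension of `R` (embedded via `φ`) with variables `x₁,…,xₙ`:
`φ` is injective, `A` is a free left `R`-module with basis the standard monomials,
and the relations (iii) and (iv) of the definition hold. -/
def IsSkewPBWExt {R A : Type*} [Ring R] [Ring A] {n : ℕ} (φ : R →+* A) (x : Fin n → A) :
    Prop :=
  Function.Injective φ ∧
  (letI : Module R A := Module.compHom A φ;
    LinearIndependent R (stdMon x) ∧
      Submodule.span R (Set.range (stdMon x)) = (⊤ : Submodule R A)) ∧
  (∀ i : Fin n, ∀ r : R, r ≠ 0 → ∃ c : R, c ≠ 0 ∧ ∃ s : R,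
      x i * φ r - φ c * x i = φ s) ∧
  (∀ i j : Fin n, ∃ c : R, c ≠ 0 ∧ ∃ s : R, ∃ t : Fin n → R,
      x j * x i - φ c * (x i * x j) = φ s + ∑ k, φ (t k) * x k)

private lemma prodOfFn_single {A : Type*} [Monoid A] :
    ∀ {n : ℕ} (f : Fin n → A) (i : Fin n), (∀ j, j ≠ i → f j = 1) →
      (List.ofFn f).prod = f i := by
  intro n
  induction n with
  | zero => exact fun f i => i.elim0
  | succ m ih =>
    intro f i hf
    rw [List.ofFn_succ, List.prod_cons]
    induction i using Fin.cases with
    | zero =>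
      have htail : (List.ofFn fun j : Fin m => f j.succ).prod = 1 := by
        apply List.prod_eq_one
        intro a ha
        rw [List.mem_ofFn] at ha
        obtain ⟨j, rfl⟩ := ha
        exact hf _ (Fin.succ_ne_zero j)
      rw [htail, mul_one]
    | succ k =>
      have h0 : f 0 = 1 := hf 0 (by exact fun h => (Fin.succ_ne_zero k h.symm))
      have := ih (fun j => f j.succ) k (fun j hj => hf j.succ (by
        intro hc; exact hj (Fin.succ_injective m hc)))
      rw [h0, one_mul, this]

private lemma stdMon_zero {A : Type*} [Ring A] {n : ℕ} (x : Fin n → A) :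
    stdMon x 0 = 1 := by
  unfold stdMon
  simp

private lemma stdMon_single {A : Type*} [Ring A] {n : ℕ} (x : Fin n → A) (i : Fin n) :
    stdMon x (Pi.single i 1) = x i := by
  unfold stdMon
  have := prodOfFn_single (fun j => x j ^ Pi.single i 1 j) i (by
    intro j hj
    simp [Pi.single_eq_of_ne hj])
  rw [this]
  simp

/-- Proposition: a skew PBW extension induces, for each `i`, an injective ring
endomorphism `σᵢ` of `R` and a `σᵢ`-derivation `δᵢ` with `xᵢ r = σᵢ(r) xᵢ + δᵢ(r)`. -/
theorem stmt2 {R A : Type*} [Ring R] [Ring A] {n : ℕ} (φ : R →+* A) (x : Fin n → A)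
    (h : IsSkewPBWExt φ x) :
    ∀ i : Fin n, ∃ σ : R →+* R, Function.Injective σ ∧
      ∃ δ : R →+ R, (∀ r s : R, δ (r * s) = σ r * δ s + δ r * s) ∧
        ∀ r : R, x i * φ r = φ (σ r) * x i + φ (δ r) := by
  letI : Module R A := Module.compHom A φ
  obtain ⟨hinj, ⟨li, -⟩, hiii, -⟩ := h
  intro i
  -- key uniqueness fact
  have hne : (0 : Fin n → ℕ) ≠ Pi.single i 1 := by
    intro hc
    have := congrFun hc i
    simp at this
  have finj : Function.Injective ![(0 : Fin n → ℕ), Pi.single i 1] := by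
    intro a b hab
    fin_cases a <;> fin_cases b <;> simp_all
  have li2 : LinearIndependent R (stdMon x ∘ ![(0 : Fin n → ℕ), Pi.single i 1]) :=
    li.comp _ finj
  have key : ∀ a b : R, φ a * x i + φ b = 0 → a = 0 ∧ b = 0 := by
    intro a b hab
    have := (Fintype.linearIndependent_iff.mp li2) ![b, a] (by
      rw [Fin.sum_univ_two]
      show b • stdMon x 0 + a • stdMon x (Pi.single i 1) = 0
      rw [stdMon_zero, stdMon_single]
      show φ b * 1 + φ a * x i = 0
      rw [mul_one, add_comm]
      exact hab)
    exact ⟨this 1, this 0⟩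
  have uniq : ∀ a b a' b' : R, φ a * x i + φ b = φ a' * x i + φ b' → a = a' ∧ b = b' := by
    intro a b a' b' hab
    have h1 : φ (a - a') * x i + φ (b - b') = 0 := by
      rw [map_sub, map_sub, sub_mul,
        show φ a * x i - φ a' * x i + (φ b - φ b') =
          (φ a * x i + φ b) - (φ a' * x i + φ b') by abel, hab, sub_self]
    obtain ⟨h2, h3⟩ := key _ _ h1
    exact ⟨sub_eq_zero.mp h2, sub_eq_zero.mp h3⟩
  have ex : ∀ r : R, ∃ a b : R, x i * φ r = φ a * x i + φ b := by
    intro r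
    by_cases hr : r = 0
    · exact ⟨0, 0, by simp [hr]⟩
    · obtain ⟨c, hc, s, hs⟩ := hiii i r hr
      exact ⟨c, s, by rw [← hs]; abel⟩
  choose a b hab using ex
  have ha0 : a 0 = 0 ∧ b 0 = 0 := by
    apply uniq
    rw [← hab 0]
    simp
  have hadd : ∀ r s : R, a (r + s) = a r + a s ∧ b (r + s) = b r + b s := by
    intro r s
    apply uniq
    rw [← hab (r + s), map_add, mul_add, hab r, hab s, map_add, map_add, add_mul]
    abel
  have hone : a 1 = 1 ∧ b 1 = 0 := by
    apply uniq
    rw [← hab 1]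
    simp
  have hmul : ∀ r s : R, a (r * s) = a r * a s ∧ b (r * s) = a r * b s + b r * s := by
    intro r s
    apply uniq
    rw [← hab (r * s), map_mul, ← mul_assoc, hab r, add_mul, mul_assoc, hab s]
    simp only [map_mul, map_add]
    noncomm_ring
  have hcne : ∀ r : R, r ≠ 0 → a r ≠ 0 := by
    intro r hr
    obtain ⟨c, hc, s, hs⟩ := hiii i r hr
    have : a r = c ∧ b r = s := by
      apply uniq
      rw [← hab r, ← hs]
      abel
    rw [this.1]
    exact hc
  refine ⟨⟨⟨⟨a, hone.1⟩, fun r s => (hmul r s).1⟩, ha0.1, fun r s => (hadd r s).1⟩, ?_,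
    ⟨⟨b, ha0.2⟩, fun r s => (hadd r s).2⟩, fun r s => (hmul r s).2, hab⟩
  intro r s hrs
  by_contra hne'
  have hsub : a (r - s) = 0 := by
    have h1 := (hadd (r - s) s).1
    rw [sub_add_cancel] at h1
    simp only [RingHom.coe_mk, MonoidHom.coe_mk, OneHom.coe_mk] at hrs
    rw [hrs] at h1
    exact right_eq_add.mp h1
  exact hcne (r - s) (sub_ne_zero.mpr hne') hsub
end

section
/- Let A be a K-algebra over a field K admitting two graduations A = ⊕_{n≥0} A_n = ⊕_{n≥0} B_n, each of which makes A a connected ℕ-graded K-algebra finitely generated in degree 1. Then there exists a K-algebra automorphism φ : A → A such that φ(A_n) = B_n for every n ≥ 0; in particular, dim_K A_n = dim_K B_n for every n ≥ 0. -/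
/-- A connected ℕ-graded `K`-algebra finitely generated in degree 1. -/
structure ConnGradedAlg (K : Type*) [Field K] (A : Type*) [Ring A] [Algebra K A] where
  /-- the graduation -/
  gr : ℕ → Submodule K A
  /-- `A = ⊕_{n≥0} A_n` internally -/
  internal : DirectSum.IsInternal gr
  /-- `A_m · A_n ⊆ A_{m+n}` -/
  mul_mem : ∀ m n : ℕ, ∀ a ∈ gr m, ∀ b ∈ gr n, a * b ∈ gr (m + n)
  /-- connected: `A_0 = K·1` -/
  grade_zero : gr 0 = (1 : Submodule K A)
  /-- `A_1` is finite dimensional over `K` -/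
  finiteDimOne : FiniteDimensional K (gr 1)
  /-- `A` is generated in degree 1 -/
  gen : Algebra.adjoin K (gr 1 : Set A) = ⊤


namespace BZ

open DirectSum

variable {K A : Type*} [Field K] [Ring A] [Algebra K A]

variable (G : ConnGradedAlg K A)

/-- the decomposition equivalence -/
noncomputable def dec : (⨁ n, G.gr n) ≃ₗ[K] A :=
  LinearEquiv.ofBijective (DirectSum.coeLinearMap G.gr) G.internal

/-- projection onto the n-th graded piece -/
noncomputable def pr (n : ℕ) : A →ₗ[K] G.gr n :=
  (DirectSum.component K ℕ (fun m => G.gr m) n).comp (dec G).symm.toLinearMap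

lemma pr_apply (n : ℕ) (x : A) : pr G n x = (dec G).symm x n := rfl

lemma pr_of_mem {n : ℕ} {x : A} (h : x ∈ G.gr n) : pr G n x = ⟨x, h⟩ :=
  G.internal.ofBijective_coeLinearMap_of_mem h

lemma pr_of_mem_ne {m n : ℕ} {x : A} (h : x ∈ G.gr m) (hne : m ≠ n) : pr G n x = 0 :=
  G.internal.ofBijective_coeLinearMap_of_mem_ne hne h

lemma eq_sum_pr (x : A) : ∃ s : Finset ℕ, x = ∑ m ∈ s, ((pr G m x : A)) := by
  classical
  refine ⟨((dec G).symm x).support, ?_⟩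
  conv_lhs => rw [← (dec G).apply_symm_apply x]
  rw [show (dec G) ((dec G).symm x)
      = DirectSum.coeLinearMap G.gr ((dec G).symm x) from rfl]
  rw [DirectSum.coeLinearMap_eq_dfinsuppSum]
  rfl

/-- sum of graded pieces of degree < n -/
def Flo (n : ℕ) : Submodule K A := ⨆ m : Fin n, G.gr m

/-- sum of graded pieces of degree ≥ n -/
def Fhi (n : ℕ) : Submodule K A := ⨆ m : ℕ, G.gr (n + m)

lemma mem_Flo_of_mem {m n : ℕ} (h : m < n) {x : A} (hx : x ∈ G.gr m) : x ∈ Flo G n :=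
  (le_iSup (fun m : Fin n => G.gr m) ⟨m, h⟩) hx

lemma mem_Fhi_of_mem {m n : ℕ} (h : n ≤ m) {x : A} (hx : x ∈ G.gr m) : x ∈ Fhi G n := by
  have hm : m = n + (m - n) := by omega
  exact (le_iSup (fun k : ℕ => G.gr (n + k)) (m - n)) (hm ▸ hx)

lemma Flo_mono {n n' : ℕ} (h : n ≤ n') : Flo G n ≤ Flo G n' :=
  iSup_le fun m => le_iSup (fun m : Fin n' => G.gr m) ⟨m, lt_of_lt_of_le m.2 h⟩

lemma Fhi_anti {n n' : ℕ} (h : n ≤ n') : Fhi G n' ≤ Fhi G n :=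
  iSup_le fun m x hx => mem_Fhi_of_mem G (by omega) hx

lemma gr_le_Fhi {n m : ℕ} (h : n ≤ m) : G.gr m ≤ Fhi G n :=
  fun _ hx => mem_Fhi_of_mem G h hx

lemma gr_le_Flo {n m : ℕ} (h : m < n) : G.gr m ≤ Flo G n :=
  fun _ hx => mem_Flo_of_mem G h hx

lemma Fhi_zero : Fhi G 0 = ⊤ :=
  top_le_iff.mp (le_of_eq_of_le G.internal.submodule_iSup_eq_top.symm
    (iSup_le fun m => gr_le_Fhi G (Nat.zero_le m)))

lemma Flo_zero : Flo G 0 = ⊥ := by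
  simp [Flo]

lemma Flo_succ (n : ℕ) : Flo G (n + 1) = Flo G n ⊔ G.gr n := by
  refine le_antisymm (iSup_le fun m => ?_) (sup_le (Flo_mono G (Nat.le_succ n))
    (gr_le_Flo G (Nat.lt_succ_self n)))
  rcases Nat.lt_or_ge (m : ℕ) n with h | h
  · exact (gr_le_Flo G h).trans le_sup_left
  · have : (m : ℕ) = n := by omega
    rw [this]; exact le_sup_right

lemma pr_eq_zero_of_mem_Flo {n k : ℕ} (hk : n ≤ k) {x : A} (h : x ∈ Flo G n) :
    pr G k x = 0 := by
  refine Submodule.iSup_induction (motive := fun y => pr G k y = 0) (fun m : Fin n => G.gr m) h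
    (fun i y hy => pr_of_mem_ne G hy (by omega)) (map_zero _) (fun y z hy hz => ?_)
  show pr G k (y + z) = 0; rw [map_add, hy, hz, add_zero]

lemma pr_eq_zero_of_mem_Fhi {n k : ℕ} (hk : k < n) {x : A} (h : x ∈ Fhi G n) :
    pr G k x = 0 := by
  refine Submodule.iSup_induction (motive := fun y => pr G k y = 0) (fun m : ℕ => G.gr (n + m)) h
    (fun i y hy => pr_of_mem_ne G hy (by omega)) (map_zero _) (fun y z hy hz => ?_)
  show pr G k (y + z) = 0; rw [map_add, hy, hz, add_zero]

lemma mem_Flo_of_pr {n : ℕ} {x : A} (h : ∀ k, n ≤ k → pr G k x = 0) : x ∈ Flo G n := by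
  obtain ⟨s, hs⟩ := eq_sum_pr G x
  rw [hs]
  refine Submodule.sum_mem _ fun m _ => ?_
  rcases Nat.lt_or_ge m n with hm | hm
  · exact mem_Flo_of_mem G hm (pr G m x).2
  · rw [h m hm]; simp

lemma mem_Fhi_of_pr {n : ℕ} {x : A} (h : ∀ k, k < n → pr G k x = 0) : x ∈ Fhi G n := by
  obtain ⟨s, hs⟩ := eq_sum_pr G x
  rw [hs]
  refine Submodule.sum_mem _ fun m _ => ?_
  rcases Nat.lt_or_ge m n with hm | hm
  · rw [h m hm]; simp
  · exact mem_Fhi_of_mem G hm (pr G m x).2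

lemma eq_zero_of_pr_eq_zero {x : A} (h : ∀ k, pr G k x = 0) : x = 0 := by
  obtain ⟨s, hs⟩ := eq_sum_pr G x
  rw [hs]
  exact Finset.sum_eq_zero fun m _ => by rw [h m]; rfl

lemma Flo_inf_Fhi_self (n : ℕ) : Flo G n ⊓ Fhi G n = ⊥ := by
  refine le_bot_iff.mp fun x hx => ?_
  have h : ∀ k, pr G k x = 0 := fun k => by
    rcases Nat.lt_or_ge k n with hk | hk
    · exact pr_eq_zero_of_mem_Fhi G hk hx.2
    · exact pr_eq_zero_of_mem_Flo G hk hx.1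
  simpa using eq_zero_of_pr_eq_zero G h

lemma mul_mem_Fhi {m n : ℕ} {a b : A} (ha : a ∈ Fhi G m) (hb : b ∈ Fhi G n) :
    a * b ∈ Fhi G (m + n) := by
  refine Submodule.iSup_induction (motive := fun y => y * b ∈ Fhi G (m + n))
    (fun k : ℕ => G.gr (m + k)) ha (fun i y hy => ?_) (by simp) (fun y z hy hz => ?_)
  · refine Submodule.iSup_induction (motive := fun w => y * w ∈ Fhi G (m + n))
      (fun k : ℕ => G.gr (n + k)) hb (fun j w hw => ?_) (by simp) (fun w v hw hv => ?_)
    · exact mem_Fhi_of_mem G (by omega) (G.mul_mem _ _ _ hy _ hw)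
    · show y * (w + v) ∈ _
      rw [mul_add]; exact add_mem hw hv
  · show (y + z) * b ∈ _
    rw [add_mul]; exact add_mem hy hz

lemma mul_mem_Flo_left {m n : ℕ} {a b : A} (ha : a ∈ Flo G m) (hb : b ∈ G.gr n) :
    a * b ∈ Flo G (m + n) := by
  refine Submodule.iSup_induction (motive := fun y => y * b ∈ Flo G (m + n))
    (fun k : Fin m => G.gr k) ha (fun i y hy => ?_) (by simp) (fun y z hy hz => ?_)
  · exact mem_Flo_of_mem G (by omega) (G.mul_mem _ _ _ hy _ hb)
  · show (y + z) * b ∈ _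
    rw [add_mul]; exact add_mem hy hz

lemma mul_mem_Flo_right {m n : ℕ} {a b : A} (ha : a ∈ G.gr m) (hb : b ∈ Flo G n) :
    a * b ∈ Flo G (m + n) := by
  refine Submodule.iSup_induction (motive := fun w => a * w ∈ Flo G (m + n))
    (fun k : Fin n => G.gr k) hb (fun j w hw => ?_) (by simp) (fun w v hw hv => ?_)
  · exact mem_Flo_of_mem G (by omega) (G.mul_mem _ _ _ ha _ hw)
  · show a * (w + v) ∈ _
    rw [mul_add]; exact add_mem hw hv

lemma mul_mem_Flo {m n : ℕ} {a b : A} (ha : a ∈ Flo G m) (hb : b ∈ Flo G n) :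
    a * b ∈ Flo G (m + n) := by
  refine Submodule.iSup_induction (motive := fun y => y * b ∈ Flo G (m + n))
    (fun k : Fin m => G.gr k) ha (fun i y hy => ?_) (by simp) (fun y z hy hz => ?_)
  · exact Flo_mono G (by omega) (mul_mem_Flo_right G hy hb)
  · show (y + z) * b ∈ _
    rw [add_mul]; exact add_mem hy hz

lemma pr_mul_lowest {m n : ℕ} {a b : A} (ha : a ∈ Fhi G m) (hb : b ∈ Fhi G n) :
    (pr G (m + n) (a * b) : A) = (pr G m a : A) * (pr G n b : A) := by
  set pa : A := (pr G m a : A) with hpa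
  set pb : A := (pr G n b : A) with hpb
  have hpam : pa ∈ G.gr m := (pr G m a).2
  have hpbm : pb ∈ G.gr n := (pr G n b).2
  have ha' : a - pa ∈ Fhi G (m + 1) := by
    refine mem_Fhi_of_pr G fun k hk => ?_
    rcases Nat.lt_or_ge k m with hkm | hkm
    · rw [map_sub, pr_eq_zero_of_mem_Fhi G hkm ha,
        pr_of_mem_ne G hpam (by omega), sub_zero]
    · have hkm' : k = m := by omega
      subst hkm'
      rw [map_sub, pr_of_mem G hpam]
      refine Subtype.ext ?_
      simp [hpa]
  have hb' : b - pb ∈ Fhi G (n + 1) := by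
    refine mem_Fhi_of_pr G fun k hk => ?_
    rcases Nat.lt_or_ge k n with hkn | hkn
    · rw [map_sub, pr_eq_zero_of_mem_Fhi G hkn hb,
        pr_of_mem_ne G hpbm (by omega), sub_zero]
    · have hkn' : k = n := by omega
      subst hkn'
      rw [map_sub, pr_of_mem G hpbm]
      refine Subtype.ext ?_
      simp [hpb]
  have key : a * b = pa * pb + (pa * (b - pb) + ((a - pa) * pb + (a - pa) * (b - pb))) := by
    noncomm_ring
  have h1 : pa * (b - pb) ∈ Fhi G (m + n + 1) :=
    (by omega : m + (n+1) = m + n + 1) ▸ mul_mem_Fhi G (mem_Fhi_of_mem G le_rfl hpam) hb'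
  have h2 : (a - pa) * pb ∈ Fhi G (m + n + 1) :=
    (by omega : (m+1) + n = m + n + 1) ▸ mul_mem_Fhi G ha' (mem_Fhi_of_mem G le_rfl hpbm)
  have h3 : (a - pa) * (b - pb) ∈ Fhi G (m + n + 1) :=
    Fhi_anti G (by omega) ((mul_mem_Fhi G ha' hb'))
  have hrest : pa * (b - pb) + ((a - pa) * pb + (a - pa) * (b - pb)) ∈ Fhi G (m + n + 1) :=
    add_mem h1 (add_mem h2 h3)
  rw [key, map_add, pr_of_mem G (G.mul_mem _ _ _ hpam _ hpbm),
    pr_eq_zero_of_mem_Fhi G (by omega) hrest, add_zero]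

/-- every element lies in the sup of the powers of the degree-one piece -/
lemma mem_iSupPow (x : A) : x ∈ ⨆ n : ℕ, (G.gr 1 : Submodule K A) ^ n := by
  have hx : x ∈ Algebra.adjoin K (G.gr 1 : Set A) := by rw [G.gen]; trivial
  induction hx using Algebra.adjoin_induction with
  | mem a ha => exact le_iSup (fun n => (G.gr 1 : Submodule K A) ^ n) 1 (by simpa using ha)
  | algebraMap r =>
      refine le_iSup (fun n => (G.gr 1 : Submodule K A) ^ n) 0 ?_
      show (algebraMap K A) r ∈ (G.gr 1 : Submodule K A) ^ 0
      rw [pow_zero]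
      exact Submodule.algebraMap_mem r
  | add a b _ _ ha hb => exact add_mem ha hb
  | mul a b _ _ ha hb =>
      refine Submodule.iSup_induction (motive := fun y => y * b ∈ ⨆ n, (G.gr 1 : Submodule K A) ^ n)
        (fun n : ℕ => (G.gr 1 : Submodule K A) ^ n) ha (fun i y hy => ?_) (by simp)
        (fun y z hy hz => ?_)
      · refine Submodule.iSup_induction (motive := fun w => y * w ∈ ⨆ n, (G.gr 1 : Submodule K A) ^ n)
          (fun n : ℕ => (G.gr 1 : Submodule K A) ^ n) hb (fun j w hw => ?_) (by simp)
          (fun w v hw hv => ?_)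
        · refine le_iSup (fun n => (G.gr 1 : Submodule K A) ^ n) (i + j) ?_
          show y * w ∈ (G.gr 1 : Submodule K A) ^ (i + j)
          rw [pow_add]
          exact Submodule.mul_mem_mul hy hw
        · show y * (w + v) ∈ _
          rw [mul_add]; exact add_mem hw hv
      · show (y + z) * b ∈ _
        rw [add_mul]; exact add_mem hy hz

lemma pow_le_gr (n : ℕ) : (G.gr 1 : Submodule K A) ^ n ≤ G.gr n := by
  induction n with
  | zero => rw [pow_zero, ← G.grade_zero]
  | succ n ih =>
      rw [pow_succ]
      refine Submodule.mul_le.mpr fun a ha b hb => G.mul_mem _ _ _ (ih ha) _ hb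

lemma gr_eq_pow (n : ℕ) : G.gr n = (G.gr 1 : Submodule K A) ^ n := by
  refine le_antisymm (fun x hx => ?_) (pow_le_gr G n)
  have key : ∀ y : A, (pr G n y : A) ∈ (G.gr 1 : Submodule K A) ^ n := by
    intro y
    refine Submodule.iSup_induction (motive := fun y => (pr G n y : A) ∈ (G.gr 1 : Submodule K A) ^ n)
      (fun m : ℕ => (G.gr 1 : Submodule K A) ^ m) (mem_iSupPow G y)
      (fun i z hz => ?_) (by simp) (fun z w hz hw => ?_)
    · rcases eq_or_ne i n with rfl | hne
      · rw [pr_of_mem G (pow_le_gr G i hz)]; exact hz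
      · rw [pr_of_mem_ne G (pow_le_gr G i hz) hne]; simp
    · show (pr G n (z + w) : A) ∈ _
      rw [map_add]; exact add_mem hz hw
  have := key x
  rwa [pr_of_mem G hx] at this

lemma finiteDimensional_gr (n : ℕ) : FiniteDimensional K (G.gr n) := by
  rw [gr_eq_pow]
  have h1 : FiniteDimensional K (G.gr 1) := G.finiteDimOne
  have hfg : (G.gr 1 : Submodule K A).FG := by
    rw [Submodule.fg_iff_finiteDimensional]; exact h1
  rw [← Submodule.fg_iff_finiteDimensional]
  exact hfg.pow n

lemma finiteDimensional_Flo (n : ℕ) : FiniteDimensional K (Flo G n) := by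
  induction n with
  | zero => rw [Flo_zero]; infer_instance
  | succ n ih =>
      rw [Flo_succ]
      have := finiteDimensional_gr G n
      exact Submodule.finiteDimensional_sup _ _

lemma finrank_Flo_succ (n : ℕ) :
    Module.finrank K (Flo G (n + 1)) = Module.finrank K (Flo G n) + Module.finrank K (G.gr n) := by
  have h1 := finiteDimensional_Flo G n
  have h2 := finiteDimensional_gr G n
  have hinf : Flo G n ⊓ G.gr n = ⊥ := by
    refine le_bot_iff.mp fun x hx => ?_
    have hx1 : pr G n x = 0 := pr_eq_zero_of_mem_Flo G le_rfl hx.1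
    have hx2 : pr G n x = ⟨x, hx.2⟩ := pr_of_mem G hx.2
    have : x = 0 := by
      have := hx2.symm.trans hx1
      exact congrArg Subtype.val this
    simp [this]
  have := Submodule.finrank_sup_add_finrank_inf_eq (Flo G n) (G.gr n)
  rw [hinf, ← Flo_succ] at this
  simpa using this

lemma pr_zero_eq_algebraMap (x : A) : ∃ c : K, (pr G 0 x : A) = algebraMap K A c := by
  have h : ∀ y : A, y ∈ G.gr 0 → ∃ c : K, y = algebraMap K A c := by
    intro y hy
    rw [G.grade_zero, Submodule.mem_one] at hy
    obtain ⟨c, hc⟩ := hy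
    exact ⟨c, hc.symm⟩
  exact h _ (pr G 0 x).2

lemma sub_pr_zero_mem (x : A) : x - (pr G 0 x : A) ∈ Fhi G 1 := by
  refine mem_Fhi_of_pr G fun k hk => ?_
  have hk0 : k = 0 := by omega
  subst hk0
  rw [map_sub, pr_of_mem G (pr G 0 x).2]
  exact Subtype.ext (by simp)

variable (G1 G2 : ConnGradedAlg K A)

lemma Tlem : ∀ m : ℕ, ((G1.gr 1 : Submodule K A)) ^ m ≤ Flo G1 m ⊔ Fhi G2 m := by
  intro m
  induction m with
  | zero =>
      rw [Fhi_zero]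
      exact le_trans le_top le_sup_right
  | succ m ih =>
      rw [pow_succ]
      refine Submodule.mul_le.mpr fun w hw x hx => ?_
      obtain ⟨u, hu, v, hv, huv⟩ := Submodule.mem_sup.mp (ih hw)
      obtain ⟨c, hc⟩ := pr_zero_eq_algebraMap G2 x
      have hj : x - algebraMap K A c ∈ Fhi G2 1 := hc ▸ sub_pr_zero_mem G2 x
      have hvz : v * algebraMap K A c = c • v := by
        rw [← Algebra.commutes, ← Algebra.smul_def]
      have key : w * x = (u * x + (c • w - c • u)) + v * (x - algebraMap K A c) := by
        have h1 : c • w - c • u = c • v := by rw [← huv, smul_add]; abel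
        rw [h1, ← hvz, ← huv]
        noncomm_ring
      rw [key]
      refine add_mem (Submodule.mem_sup_left ?_) (Submodule.mem_sup_right ?_)
      · refine add_mem (mul_mem_Flo_left G1 hu hx) (sub_mem ?_ ?_)
        · exact Submodule.smul_mem _ _ (gr_le_Flo G1 (Nat.lt_succ_self m) (pow_le_gr G1 m hw))
        · exact Flo_mono G1 (Nat.le_succ m) (Submodule.smul_mem _ _ hu)
      · exact mul_mem_Fhi G2 hv hj

lemma Ulem : ∀ n m : ℕ, n ≤ m →
    ((G1.gr 1 : Submodule K A)) ^ m ≤ Flo G1 n ⊔ Fhi G2 n := by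
  intro n m hnm
  induction m, hnm using Nat.le_induction with
  | base => exact Tlem G1 G2 n
  | succ m hnm ih =>
      rw [pow_succ]
      refine Submodule.mul_le.mpr fun w hw x hx => ?_
      obtain ⟨u, hu, v, hv, huv⟩ := Submodule.mem_sup.mp (ih hw)
      obtain ⟨c, hc⟩ := pr_zero_eq_algebraMap G2 x
      have hj : x - algebraMap K A c ∈ Fhi G2 1 := hc ▸ sub_pr_zero_mem G2 x
      have hvz : v * algebraMap K A c = c • v := by
        rw [← Algebra.commutes, ← Algebra.smul_def]
      have key : w * x = (u * x + (c • w - c • u)) + v * (x - algebraMap K A c) := by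
        have h1 : c • w - c • u = c • v := by rw [← huv, smul_add]; abel
        rw [h1, ← hvz, ← huv]
        noncomm_ring
      rw [key]
      have hux : u * x ∈ Flo G1 n ⊔ Fhi G2 n := by
        have h2 : u * x ∈ Flo G1 (n + 1) := mul_mem_Flo_left G1 hu hx
        have h3 : Flo G1 (n + 1) ≤ Flo G1 n ⊔ Fhi G2 n := by
          rw [Flo_succ]
          refine sup_le le_sup_left ?_
          rw [gr_eq_pow G1 n]
          exact Tlem G1 G2 n
        exact h3 h2
      refine add_mem (add_mem hux (sub_mem ?_ ?_)) (Submodule.mem_sup_right ?_)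
      · exact ih (Submodule.smul_mem _ _ hw)
      · exact Submodule.mem_sup_left (Submodule.smul_mem _ _ hu)
      · have h4 : v * (x - algebraMap K A c) ∈ Fhi G2 (n + 1) := mul_mem_Fhi G2 hv hj
        exact Fhi_anti G2 (Nat.le_succ n) h4

lemma Csup (n : ℕ) : Flo G1 n ⊔ Fhi G2 n = ⊤ := by
  rw [eq_top_iff]
  intro x _
  have hx := mem_iSupPow G1 x
  refine Submodule.iSup_induction (motive := fun y => y ∈ Flo G1 n ⊔ Fhi G2 n)
    (fun m : ℕ => (G1.gr 1 : Submodule K A) ^ m) hx (fun m y hy => ?_) (by simp)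
    (fun y z hy hz => add_mem hy hz)
  rcases Nat.lt_or_ge m n with hm | hm
  · exact Submodule.mem_sup_left (mem_Flo_of_mem G1 hm (pow_le_gr G1 m hy))
  · exact Ulem G1 G2 n m hm hy

/-- the composite `Flo G1 n → A → A ⧸ Fhi G2 n` -/
noncomputable def qmap (n : ℕ) : (Flo G1 n) →ₗ[K] (A ⧸ Fhi G2 n) :=
  (Fhi G2 n).mkQ.comp (Flo G1 n).subtype

lemma qmap_surjective (n : ℕ) : Function.Surjective (qmap G1 G2 n) := by
  intro y
  obtain ⟨x, hx⟩ := (Fhi G2 n).mkQ_surjective y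
  have hxt : x ∈ Flo G1 n ⊔ Fhi G2 n := by rw [Csup G1 G2]; trivial
  obtain ⟨u, hu, v, hv, huv⟩ := Submodule.mem_sup.mp hxt
  refine ⟨⟨u, hu⟩, ?_⟩
  have : (Fhi G2 n).mkQ v = 0 := (Submodule.Quotient.mk_eq_zero _).mpr hv
  calc qmap G1 G2 n ⟨u, hu⟩ = (Fhi G2 n).mkQ u := rfl
    _ = (Fhi G2 n).mkQ u + (Fhi G2 n).mkQ v := by rw [this, add_zero]
    _ = (Fhi G2 n).mkQ x := by rw [← map_add, huv]
    _ = y := hx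

lemma finiteDimensional_quot (n : ℕ) : FiniteDimensional K (A ⧸ Fhi G2 n) := by
  have := finiteDimensional_Flo G2 n
  exact Module.Finite.of_surjective (qmap G2 G2 n) (qmap_surjective G2 G2 n)

lemma qmap_self_bijective (n : ℕ) : Function.Bijective (qmap G G n) := by
  constructor
  · rw [← LinearMap.ker_eq_bot]
    refine (Submodule.eq_bot_iff _).mpr fun x hx => ?_
    have h1 : (x : A) ∈ Fhi G n := (Submodule.Quotient.mk_eq_zero _).mp hx
    have h2 : (x : A) ∈ Flo G n ⊓ Fhi G n := ⟨x.2, h1⟩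
    rw [Flo_inf_Fhi_self] at h2
    exact Subtype.ext (by simpa using h2)
  · exact qmap_surjective G G n

lemma finrank_quot_eq_self (n : ℕ) :
    Module.finrank K (A ⧸ Fhi G n) = Module.finrank K (Flo G n) :=
  (LinearEquiv.finrank_eq (LinearEquiv.ofBijective (qmap G G n) (qmap_self_bijective G n))).symm

lemma finrank_Flo_le (n : ℕ) :
    Module.finrank K (Flo G2 n) ≤ Module.finrank K (Flo G1 n) := by
  have hfd1 := finiteDimensional_Flo G1 n
  have hfd2 := finiteDimensional_Flo G2 n
  rw [← finrank_quot_eq_self G2 n]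
  have hr : LinearMap.range (qmap G1 G2 n) = ⊤ :=
    LinearMap.range_eq_top.mpr (qmap_surjective G1 G2 n)
  have := LinearMap.finrank_range_le (qmap G1 G2 n)
  rwa [hr, finrank_top] at this

lemma finrank_Flo_eq (n : ℕ) :
    Module.finrank K (Flo G1 n) = Module.finrank K (Flo G2 n) :=
  le_antisymm (finrank_Flo_le G2 G1 n) (finrank_Flo_le G1 G2 n)

lemma finrank_gr_eq (n : ℕ) :
    Module.finrank K (G1.gr n) = Module.finrank K (G2.gr n) := by
  have h1 := finrank_Flo_succ G1 n
  have h2 := finrank_Flo_succ G2 n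
  have h3 := finrank_Flo_eq G1 G2 n
  have h4 := finrank_Flo_eq G1 G2 (n + 1)
  omega

lemma Flo_inf_Fhi (n : ℕ) : Flo G1 n ⊓ Fhi G2 n = ⊥ := by
  have hfd1 := finiteDimensional_Flo G1 n
  have hfd2 := finiteDimensional_quot G2 n
  have hdim : Module.finrank K (Flo G1 n) = Module.finrank K (A ⧸ Fhi G2 n) := by
    rw [finrank_quot_eq_self G2 n]
    exact finrank_Flo_eq G1 G2 n
  have hinj : Function.Injective (qmap G1 G2 n) :=
    (LinearMap.injective_iff_surjective_of_finrank_eq_finrank hdim).mpr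
      (qmap_surjective G1 G2 n)
  refine (Submodule.eq_bot_iff _).mpr fun x hx => ?_
  have h0 : qmap G1 G2 n ⟨x, hx.1⟩ = 0 := (Submodule.Quotient.mk_eq_zero _).mpr hx.2
  have := hinj (h0.trans (map_zero (qmap G1 G2 n)).symm)
  exact congrArg Subtype.val this

lemma isCompl_Fhi_Flo (n : ℕ) : IsCompl (Fhi G2 n) (Flo G1 n) := by
  constructor
  · rw [disjoint_iff, inf_comm]
    exact Flo_inf_Fhi G1 G2 n
  · rw [codisjoint_iff, sup_comm]
    exact Csup G1 G2 n

/-- projection of `A` onto `Fhi G2 n` along `Flo G1 n` -/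
noncomputable def tmap (n : ℕ) : A →ₗ[K] A :=
  (Fhi G2 n).subtype.comp (Submodule.linearProjOfIsCompl _ _ (isCompl_Fhi_Flo G1 G2 n))

lemma tmap_mem (n : ℕ) (x : A) : tmap G1 G2 n x ∈ Fhi G2 n :=
  (Submodule.linearProjOfIsCompl _ _ (isCompl_Fhi_Flo G1 G2 n) x).2

lemma tmap_of_mem_Fhi {n : ℕ} {x : A} (hx : x ∈ Fhi G2 n) : tmap G1 G2 n x = x :=
  congrArg Subtype.val
    (Submodule.linearProjOfIsCompl_apply_left (isCompl_Fhi_Flo G1 G2 n) ⟨x, hx⟩)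

lemma tmap_of_mem_Flo {n : ℕ} {x : A} (hx : x ∈ Flo G1 n) : tmap G1 G2 n x = 0 :=
  congrArg Subtype.val
    (Submodule.linearProjOfIsCompl_apply_right' (isCompl_Fhi_Flo G1 G2 n) hx)

lemma tmap_unique {n : ℕ} {x s : A} (hs : s ∈ Fhi G2 n) (hxs : x - s ∈ Flo G1 n) :
    tmap G1 G2 n x = s := by
  have h : tmap G1 G2 n x = tmap G1 G2 n (x - s) + tmap G1 G2 n s := by
    rw [← map_add]; congr 1; abel
  rw [h, tmap_of_mem_Flo G1 G2 hxs, tmap_of_mem_Fhi G1 G2 hs, zero_add]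

lemma sub_tmap_mem_Flo (n : ℕ) (x : A) : x - tmap G1 G2 n x ∈ Flo G1 n := by
  have hxt : x ∈ Flo G1 n ⊔ Fhi G2 n := by rw [Csup G1 G2]; trivial
  obtain ⟨u, hu, v, hv, huv⟩ := Submodule.mem_sup.mp hxt
  have : tmap G1 G2 n x = v := tmap_unique G1 G2 hv (by rw [← huv]; simpa using hu)
  rw [this, ← huv]
  simpa using hu

lemma tmap_mul {m n : ℕ} {a b : A} (ha : a ∈ G1.gr m) (hb : b ∈ G1.gr n) :
    tmap G1 G2 (m + n) (a * b) = tmap G1 G2 m a * tmap G1 G2 n b := by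
  set ta := tmap G1 G2 m a with hta
  set tb := tmap G1 G2 n b with htb
  have h1 : ta * tb ∈ Fhi G2 (m + n) :=
    mul_mem_Fhi G2 (tmap_mem G1 G2 m a) (tmap_mem G1 G2 n b)
  have hu : a - ta ∈ Flo G1 m := sub_tmap_mem_Flo G1 G2 m a
  have hw : b - tb ∈ Flo G1 n := sub_tmap_mem_Flo G1 G2 n b
  have key : a * b - ta * tb = a * (b - tb) + (a - ta) * b - (a - ta) * (b - tb) := by
    noncomm_ring
  have h2 : a * b - ta * tb ∈ Flo G1 (m + n) := by
    rw [key]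
    exact sub_mem (add_mem (mul_mem_Flo_right G1 ha hw) (mul_mem_Flo_left G1 hu hb))
      (mul_mem_Flo G1 hu hw)
  exact tmap_unique G1 G2 h1 h2

/-- the degree-`n` component of the comparison map -/
noncomputable def rho (n : ℕ) : (G1.gr n) →ₗ[K] (G2.gr n) :=
  (pr G2 n).comp ((tmap G1 G2 n).comp (G1.gr n).subtype)

lemma rho_apply (n : ℕ) (a : G1.gr n) :
    rho G1 G2 n a = pr G2 n (tmap G1 G2 n (a : A)) := rfl

lemma rho_mul {m n : ℕ} {a b : A} (ha : a ∈ G1.gr m) (hb : b ∈ G1.gr n) :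
    (rho G1 G2 (m + n) ⟨a * b, G1.mul_mem m n a ha b hb⟩ : A)
      = (rho G1 G2 m ⟨a, ha⟩ : A) * (rho G1 G2 n ⟨b, hb⟩ : A) := by
  rw [rho_apply, rho_apply, rho_apply]
  show (pr G2 (m + n) (tmap G1 G2 (m + n) (a * b)) : A) = _
  rw [tmap_mul G1 G2 ha hb]
  exact pr_mul_lowest G2 (tmap_mem G1 G2 m a) (tmap_mem G1 G2 n b)

lemma rho_one (h1 : (1 : A) ∈ G1.gr 0) : (rho G1 G2 0 ⟨1, h1⟩ : A) = 1 := by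
  have h1' : (1 : A) ∈ G2.gr 0 := by
    rw [G2.grade_zero, Submodule.mem_one]
    exact ⟨1, map_one _⟩
  have ht : tmap G1 G2 0 (1 : A) = 1 := by
    refine tmap_unique G1 G2 ?_ ?_
    · rw [Fhi_zero]; trivial
    · rw [Flo_zero]; simp
  rw [rho_apply]
  show (pr G2 0 (tmap G1 G2 0 (1 : A)) : A) = 1
  rw [ht, pr_of_mem G2 h1']

lemma rho_injective (n : ℕ) : Function.Injective (rho G1 G2 n) := by
  rw [← LinearMap.ker_eq_bot]
  refine (Submodule.eq_bot_iff _).mpr fun a hazero => ?_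
  have h0 : (pr G2 n (tmap G1 G2 n (a : A)) : A) = 0 := by
    rw [← rho_apply]
    rw [LinearMap.mem_ker] at hazero
    rw [hazero]; rfl
  set t := tmap G1 G2 n (a : A) with hT
  have ht1 : t ∈ Fhi G2 n := tmap_mem G1 G2 n a
  have ht2 : t ∈ Fhi G2 (n + 1) := by
    refine mem_Fhi_of_pr G2 fun k hk => ?_
    rcases Nat.lt_or_ge k n with hkn | hkn
    · exact pr_eq_zero_of_mem_Fhi G2 hkn ht1
    · have : k = n := by omega
      subst this
      exact Subtype.ext (by simpa using h0)
  have ht3 : t ∈ Flo G1 (n + 1) := by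
    have h4 : (a : A) - t ∈ Flo G1 n := sub_tmap_mem_Flo G1 G2 n a
    have h5 : (a : A) ∈ Flo G1 (n + 1) := mem_Flo_of_mem G1 (Nat.lt_succ_self n) a.2
    have h6 : (a : A) - ((a : A) - t) = t := by abel
    exact h6 ▸ sub_mem h5 (Flo_mono G1 (Nat.le_succ n) h4)
  have ht0 : t = 0 := by
    have := Flo_inf_Fhi G1 G2 (n + 1)
    have hmem : t ∈ Flo G1 (n + 1) ⊓ Fhi G2 (n + 1) := ⟨ht3, ht2⟩
    rw [this] at hmem
    simpa using hmem
  have ha' : (a : A) ∈ Flo G1 n := by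
    have h4 : (a : A) - t ∈ Flo G1 n := sub_tmap_mem_Flo G1 G2 n a
    rw [ht0, sub_zero] at h4
    exact h4
  have : pr G1 n (a : A) = 0 := pr_eq_zero_of_mem_Flo G1 le_rfl ha'
  rw [pr_of_mem G1 a.2] at this
  exact Subtype.ext (by simpa using (congrArg Subtype.val this.symm).symm)

lemma rho_bijective (n : ℕ) : Function.Bijective (rho G1 G2 n) := by
  have hfd1 := finiteDimensional_gr G1 n
  have hfd2 := finiteDimensional_gr G2 n
  refine ⟨rho_injective G1 G2 n, ?_⟩
  exact (LinearMap.injective_iff_surjective_of_finrank_eq_finrank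
    (finrank_gr_eq G1 G2 n)).mp (rho_injective G1 G2 n)

/-- the comparison map as a linear equivalence -/
noncomputable def rhoEquiv (n : ℕ) : (G1.gr n) ≃ₗ[K] (G2.gr n) :=
  LinearEquiv.ofBijective (rho G1 G2 n) (rho_bijective G1 G2 n)

/-- the comparison automorphism, as a linear equivalence -/
noncomputable def phiLin : A ≃ₗ[K] A :=
  (dec G1).symm.trans
    ((DFinsupp.mapRange.linearEquiv (rhoEquiv G1 G2)).trans (dec G2))

lemma dec_apply {G : ConnGradedAlg K A} (y : ⨁ n, G.gr n) :
    dec G y = DirectSum.coeLinearMap G.gr y := rfl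

lemma of_eq_single {G : ConnGradedAlg K A} (n : ℕ) (v : G.gr n) :
    DirectSum.of (fun m => G.gr m) n v = DFinsupp.single n v := rfl

lemma dec_single {G : ConnGradedAlg K A} (n : ℕ) (v : G.gr n) :
    dec G (DFinsupp.single n v) = (v : A) := by
  rw [dec_apply, ← of_eq_single, DirectSum.coeLinearMap_of]

lemma dec_symm_of_mem {G : ConnGradedAlg K A} {n : ℕ} {x : A} (h : x ∈ G.gr n) :
    (dec G).symm x = DFinsupp.single n ⟨x, h⟩ := by
  rw [LinearEquiv.symm_apply_eq, dec_single]

lemma phiLin_apply_of_mem {n : ℕ} {x : A} (h : x ∈ G1.gr n) :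
    phiLin G1 G2 x = (rho G1 G2 n ⟨x, h⟩ : A) := by
  rw [phiLin, LinearEquiv.trans_apply, LinearEquiv.trans_apply, dec_symm_of_mem h]
  have h1 : (DFinsupp.mapRange.linearEquiv (rhoEquiv G1 G2))
      (DFinsupp.single n (⟨x, h⟩ : G1.gr n))
      = DFinsupp.single n (rhoEquiv G1 G2 n ⟨x, h⟩) := by
    rw [DFinsupp.mapRange.linearEquiv_apply]
    exact DFinsupp.mapRange_single
  refine (congrArg (dec G2) h1).trans ?_
  rw [dec_single]
  rfl

lemma phiLin_map_mul (a b : A) :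
    phiLin G1 G2 (a * b) = phiLin G1 G2 a * phiLin G1 G2 b := by
  have hatop : a ∈ ⨆ n, G1.gr n := by rw [G1.internal.submodule_iSup_eq_top]; trivial
  refine Submodule.iSup_induction
    (motive := fun y => ∀ z : A, phiLin G1 G2 (y * z) = phiLin G1 G2 y * phiLin G1 G2 z)
    (fun n => G1.gr n) hatop ?_ (by simp) ?_ b
  · intro m y hy
    intro z
    have hztop : z ∈ ⨆ n, G1.gr n := by rw [G1.internal.submodule_iSup_eq_top]; trivial
    refine Submodule.iSup_induction
      (motive := fun w => phiLin G1 G2 (y * w) = phiLin G1 G2 y * phiLin G1 G2 w)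
      (fun n => G1.gr n) hztop ?_ (by simp) ?_
    · intro n w hw
      rw [phiLin_apply_of_mem G1 G2 hy, phiLin_apply_of_mem G1 G2 hw,
        phiLin_apply_of_mem G1 G2 (G1.mul_mem m n y hy w hw)]
      exact rho_mul G1 G2 hy hw
    · intro w v hw hv
      show phiLin G1 G2 (y * (w + v)) = _
      rw [mul_add, map_add, hw, hv, map_add, mul_add]
  · intro y z hy hz
    intro w
    show phiLin G1 G2 ((y + z) * w) = _
    rw [add_mul, map_add, hy, hz, map_add, add_mul]

lemma phiLin_map_one : phiLin G1 G2 (1 : A) = 1 := by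
  have h1 : (1 : A) ∈ G1.gr 0 := by
    rw [G1.grade_zero, Submodule.mem_one]
    exact ⟨1, map_one _⟩
  rw [phiLin_apply_of_mem G1 G2 h1]
  exact rho_one G1 G2 h1

/-- the comparison automorphism -/
noncomputable def phi : A ≃ₐ[K] A :=
  AlgEquiv.ofLinearEquiv (phiLin G1 G2) (phiLin_map_one G1 G2) (phiLin_map_mul G1 G2)

lemma phi_map_gr (n : ℕ) :
    (G1.gr n).map (phi G1 G2).toLinearMap = G2.gr n := by
  refine le_antisymm ?_ ?_
  · rintro _ ⟨x, hx, rfl⟩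
    show phi G1 G2 x ∈ G2.gr n
    have : phi G1 G2 x = phiLin G1 G2 x := rfl
    rw [this, phiLin_apply_of_mem G1 G2 hx]
    exact (rho G1 G2 n ⟨x, hx⟩).2
  · intro y hy
    obtain ⟨x, hx⟩ := (rho_bijective G1 G2 n).2 ⟨y, hy⟩
    refine ⟨(x : A), x.2, ?_⟩
    show phi G1 G2 (x : A) = y
    have : phi G1 G2 (x : A) = phiLin G1 G2 (x : A) := rfl
    rw [this, phiLin_apply_of_mem G1 G2 x.2]
    have hx' : rho G1 G2 n ⟨(x : A), x.2⟩ = ⟨y, hy⟩ := by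
      convert hx
    rw [hx']

end BZ

/-- Corollary (Bell–Zhang): if a `K`-algebra `A` has two connected graduations finitely
generated in degree 1, then some algebra automorphism of `A` carries one graduation to the
other; in particular the two graduations have the same Hilbert series. -/
theorem stmt7 {K A : Type*} [Field K] [Ring A] [Algebra K A]
    (G1 G2 : ConnGradedAlg K A) :
    ∃ φ : A ≃ₐ[K] A,
      (∀ n : ℕ, (G1.gr n).map φ.toLinearMap = G2.gr n) ∧
      ∀ n : ℕ, Module.finrank K (G1.gr n) = Module.finrank K (G2.gr n) := by
  exact ⟨BZ.phi G1 G2, BZ.phi_map_gr G1 G2, BZ.finrank_gr_eq G1 G2⟩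
end

section
/- Let V be a vector space over a field K and let X_1, …, X_n be finitely many subspaces of V. The following are equivalent: (i) the collection {X_1, …, X_n} is distributive, i.e. the sublattice of the lattice of subspaces of V (under intersection and sum) generated by X_1, …, X_n is a distributive lattice; (ii) there exists a basis B of V such that each X_i is the linear span of a subset of B; (iii) there exists a basis B of V such that B ∩ X_i is a basis of X_i for every 1 ≤ i ≤ n. -/
/-- Membership in the sublattice generated by a set `X` of elements of a lattice. -/
inductive LatGen {α : Type*} [Lattice α] (X : Set α) : α → Prop
  | base {a : α} : a ∈ X → LatGen X a
  | inf {a b : α} : LatGen X a → LatGen X b → LatGen X (a ⊓ b)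
  | sup {a b : α} : LatGen X a → LatGen X b → LatGen X (a ⊔ b)

open Set Submodule

section Helpers
variable {K V : Type*} [Field K] [AddCommGroup V] [Module K V]

/-- Disjoint subsets of a linearly independent set have disjoint spans. -/
lemma disj_span_of_indep {B t u : Set V} (hB : LinearIndependent K (Subtype.val : B → V))
    (ht : t ⊆ B) (hu : u ⊆ B) (h : Disjoint t u) :
    Disjoint (span K t) (span K u) := by
  have h1 : t = Subtype.val '' (Subtype.val ⁻¹' t : Set B) := by
    rw [Set.image_preimage_eq_inter_range, Subtype.range_val, Set.inter_eq_left.2 ht]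
  have h2 : u = Subtype.val '' (Subtype.val ⁻¹' u : Set B) := by
    rw [Set.image_preimage_eq_inter_range, Subtype.range_val, Set.inter_eq_left.2 hu]
  rw [h1, h2]
  exact hB.disjoint_span_image (h.preimage _)

/-- For subsets of a linearly independent set, span of intersection is intersection of spans. -/
lemma span_inter_of_indep {B t u : Set V} (hB : LinearIndependent K (Subtype.val : B → V))
    (ht : t ⊆ B) (hu : u ⊆ B) :
    span K t ⊓ span K u = span K (t ∩ u) := by
  refine le_antisymm ?_ (le_inf (span_mono inter_subset_left) (span_mono inter_subset_right))
  rintro x ⟨hxt, hxu⟩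
  have hdecomp : t = (t ∩ u) ∪ (t \ u) := by
    rw [Set.inter_union_diff]
  rw [hdecomp, Submodule.span_union] at hxt
  obtain ⟨p, hp, q, hq, rfl⟩ := Submodule.mem_sup.1 hxt
  have hqu : q ∈ span K u := by
    have : q = (p + q) - p := (add_sub_cancel_left p q).symm
    rw [this]
    exact sub_mem hxu (span_mono inter_subset_right hp)
  have hdisj : Disjoint (span K (t \ u)) (span K u) :=
    disj_span_of_indep hB (diff_subset.trans ht) hu disjoint_sdiff_left
  have hq0 : q = 0 := (Submodule.disjoint_def.1 hdisj) q hq hqu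
  rw [hq0, add_zero]
  exact hp

/-- Union of two independent sets whose span-intersection is controlled is independent. -/
lemma union_indep {s t : Set V} (hs : LinearIndependent K (Subtype.val : s → V))
    (ht : LinearIndependent K (Subtype.val : t → V))
    (h : span K s ⊓ span K t ≤ span K (s ∩ t)) :
    LinearIndependent K (Subtype.val : ↥(s ∪ t) → V) := by
  have h1 : s ∪ t = s ∪ (t \ s) := by rw [Set.union_diff_self]
  rw [h1]
  refine LinearIndepOn.id_union hs (LinearIndepOn.mono ht diff_subset) ?_
  rw [Submodule.disjoint_def]
  intro x hx1 hx2
  have hx : x ∈ span K (s ∩ t) := h ⟨hx1, span_mono diff_subset hx2⟩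
  have hdisj : Disjoint (span K (t \ s)) (span K (s ∩ t)) :=
    disj_span_of_indep ht diff_subset inter_subset_right
      (Set.disjoint_left.2 fun a ha hb => ha.2 hb.1)
  exact (Submodule.disjoint_def.1 hdisj) x hx2 hx

/-- Relative basis: for `p ≤ q` there is an independent set complementing `p` inside `q`. -/
lemma exists_rel_basis (p q : Submodule K V) (hpq : p ≤ q) :
    ∃ s : Set V, s ⊆ (q : Set V) ∧ LinearIndependent K (Subtype.val : s → V) ∧
      Disjoint (span K s) p ∧ span K s ⊔ p = q := by
  obtain ⟨b, hbp, hbspan, hbi⟩ := exists_linearIndependent K (p : Set V)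
  have hbq : b ⊆ (q : Set V) := hbp.trans hpq
  obtain ⟨B, hBq, hbB, hqB, hBi⟩ := exists_linearIndepOn_id_extension hbi hbq
  have hspanb : span K b = p := by rw [hbspan, Submodule.span_eq]
  have hspanB : span K B = q := by
    refine le_antisymm (span_le.2 hBq) ?_
    intro x hx
    exact hqB hx
  refine ⟨B \ b, diff_subset.trans hBq, hBi.mono diff_subset, ?_, ?_⟩
  · have := disj_span_of_indep hBi diff_subset hbB disjoint_sdiff_left
    rwa [hspanb] at this
  · rw [← hspanb, ← Submodule.span_union, Set.diff_union_self,
      Set.union_eq_self_of_subset_right hbB, hspanB]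

end Helpers

open Set Submodule

open scoped Classical

section Construction
variable {K V : Type*} [Field K] [AddCommGroup V] [Module K V]

/-- The union of the chosen relative bases over all lattice elements below `c`. -/
def sBdef (F : Finset (Submodule K V)) (sA : Submodule K V → Set V)
    (c : Submodule K V) : Set V :=
  ⋃ a ∈ {a : Submodule K V | a ∈ F ∧ a ≤ c}, sA a

lemma mem_sBdef {F : Finset (Submodule K V)} {sA : Submodule K V → Set V}
    {c : Submodule K V} {x : V} :
    x ∈ sBdef F sA c ↔ ∃ a, (a ∈ F ∧ a ≤ c) ∧ x ∈ sA a := by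
  simp [sBdef]

lemma sBdef_mono (F : Finset (Submodule K V)) (sA : Submodule K V → Set V)
    {c d : Submodule K V} (hcd : c ≤ d) : sBdef F sA c ⊆ sBdef F sA d := by
  intro x hx
  rw [mem_sBdef] at hx ⊢
  obtain ⟨a, ⟨haF, hac⟩, hx⟩ := hx
  exact ⟨a, ⟨haF, le_trans hac hcd⟩, hx⟩
lemma key_construction {K V : Type*} [Field K] [AddCommGroup V] [Module K V]
    (F : Finset (Submodule K V)) (hbot : ⊥ ∈ F)
    (hsupF : ∀ a, a ∈ F → ∀ b, b ∈ F → a ⊔ b ∈ F)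
    (hinfF : ∀ a, a ∈ F → ∀ b, b ∈ F → a ⊓ b ∈ F)
    (hd : ∀ a, a ∈ F → ∀ b, b ∈ F → ∀ c, c ∈ F → a ⊓ (b ⊔ c) = (a ⊓ b) ⊔ (a ⊓ c))
    (sA : Submodule K V → Set V)
    (hind : ∀ c, LinearIndependent K (Subtype.val : sA c → V))
    (hdisj : ∀ c, Disjoint (span K (sA c)) ((F.filter (· < c)).sup id))
    (hspan : ∀ c, span K (sA c) ⊔ (F.filter (· < c)).sup id = c) :
    ∀ c ∈ F, span K (sBdef F sA c) = c ∧
      LinearIndependent K (Subtype.val : (sBdef F sA c) → V) := by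
  have hmono := fun {c d : Submodule K V} (h : c ≤ d) => sBdef_mono F sA h
  have hsupc : ∀ G : Finset (Submodule K V), (∀ x ∈ G, x ∈ F) → G.sup id ∈ F := by
    intro G
    induction G using Finset.induction_on with
    | empty => intro _; simpa using hbot
    | @insert x G hx ih =>
      intro h
      rw [Finset.sup_insert]
      exact hsupF x (h x (Finset.mem_insert_self _ _)) _
        (ih fun y hy => h y (Finset.mem_insert_of_mem hy))
  have hdistG : ∀ a, a ∈ F → ∀ G : Finset (Submodule K V), (∀ x ∈ G, x ∈ F) →
      a ⊓ G.sup id = G.sup (fun x => a ⊓ x) := by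
    intro a ha G
    induction G using Finset.induction_on with
    | empty => intro _; simp
    | @insert x G hx ih =>
      intro h
      rw [Finset.sup_insert, Finset.sup_insert, id_eq,
        hd a ha x (h x (Finset.mem_insert_self _ _)) (G.sup id)
          (hsupc G fun y hy => h y (Finset.mem_insert_of_mem hy)),
        ih fun y hy => h y (Finset.mem_insert_of_mem hy)]
  suffices main : ∀ k : ℕ, ∀ c ∈ F, (F.filter (· < c)).card < k →
      span K (sBdef F sA c) = c ∧
        LinearIndependent K (Subtype.val : (sBdef F sA c) → V) by
    intro c hc
    exact main (F.card + 1) c hc (Nat.lt_succ_of_le (Finset.card_filter_le F _))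
  intro k
  induction k with
  | zero => intro c _ h; omega
  | succ k ih =>
    intro c hc _hck
    have IH : ∀ b, b ∈ F → b < c → span K (sBdef F sA b) = b ∧
        LinearIndependent K (Subtype.val : (sBdef F sA b) → V) := by
      intro b hb hbc
      refine ih b hb ?_
      have hsubset : F.filter (· < b) ⊆ F.filter (· < c) := by
        intro x hx
        rw [Finset.mem_filter] at hx ⊢
        exact ⟨hx.1, lt_trans hx.2 hbc⟩
      have hbmem : b ∈ F.filter (· < c) := Finset.mem_filter.2 ⟨hb, hbc⟩
      have hbnot : b ∉ F.filter (· < b) := fun h => lt_irrefl b (Finset.mem_filter.1 h).2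
      have hlt : (F.filter (· < b)).card < (F.filter (· < c)).card :=
        Finset.card_lt_card ((Finset.ssubset_iff_of_subset hsubset).2 ⟨b, hbmem, hbnot⟩)
      omega
    have stepA : ∀ G : Finset (Submodule K V), G ⊆ F.filter (· < c) →
        span K (⋃ x ∈ (G : Set (Submodule K V)), sBdef F sA x) = G.sup id ∧
        LinearIndependent K
          (Subtype.val : (⋃ x ∈ (G : Set (Submodule K V)), sBdef F sA x) → V) := by
      intro G
      induction G using Finset.induction_on with
      | empty =>
        intro _
        constructor
        · rw [Finset.coe_empty, Set.biUnion_empty, Submodule.span_empty, Finset.sup_empty]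
        · have he : (⋃ x ∈ ((∅ : Finset (Submodule K V)) : Set (Submodule K V)),
              sBdef F sA x) = (∅ : Set V) := by
            rw [Finset.coe_empty, Set.biUnion_empty]
          rw [he]
          exact linearIndependent_empty K V
      | @insert b G hbG ihG =>
        intro hins
        have hbM := hins (Finset.mem_insert_self b G)
        have hbF : b ∈ F := (Finset.mem_filter.1 hbM).1
        have hbc : b < c := (Finset.mem_filter.1 hbM).2
        have hGM : G ⊆ F.filter (· < c) := fun x hx => hins (Finset.mem_insert_of_mem hx)
        obtain ⟨hspanG, hindG⟩ := ihG hGM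
        obtain ⟨hspanb, hindb⟩ := IH b hbF hbc
        have hUeq : (⋃ x ∈ ((insert b G : Finset (Submodule K V)) : Set (Submodule K V)),
            sBdef F sA x)
            = sBdef F sA b ∪ ⋃ x ∈ (G : Set (Submodule K V)), sBdef F sA x := by
          rw [Finset.coe_insert, Set.biUnion_insert]
        rw [hUeq]
        have hGF : ∀ x ∈ G, x ∈ F := fun x hx => (Finset.mem_filter.1 (hGM hx)).1
        have hkey : b ⊓ G.sup id ≤
            span K (sBdef F sA b ∩ ⋃ x ∈ (G : Set (Submodule K V)), sBdef F sA x) := by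
          rw [hdistG b hbF G hGF]
          refine Finset.sup_le fun x hx => ?_
          have hxF : x ∈ F := hGF x hx
          have hbx : b ⊓ x ∈ F := hinfF b hbF x hxF
          have hbxc : b ⊓ x < c := lt_of_le_of_lt inf_le_left hbc
          rw [← (IH (b ⊓ x) hbx hbxc).1]
          refine span_mono fun y hy => ⟨hmono inf_le_left hy, ?_⟩
          exact Set.mem_biUnion (Finset.mem_coe.2 hx) (hmono inf_le_right hy)
        constructor
        · rw [Submodule.span_union, hspanb, hspanG, Finset.sup_insert, id_eq]
        · refine union_indep hindb hindG ?_
          rw [hspanb, hspanG]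
          exact hkey
    obtain ⟨hspanU, hindU⟩ := stepA (F.filter (· < c)) (Finset.Subset.refl _)
    have hdec : sBdef F sA c = sA c ∪
        ⋃ x ∈ ((F.filter (· < c) : Finset (Submodule K V)) : Set (Submodule K V)),
          sBdef F sA x := by
      ext x
      simp only [mem_sBdef, Set.mem_iUnion, Set.mem_union, Finset.mem_coe,
        Finset.mem_filter, exists_prop]
      constructor
      · rintro ⟨a, ⟨haF, hac⟩, hx⟩
        rcases eq_or_lt_of_le hac with rfl | hlt
        · exact Or.inl hx
        · exact Or.inr ⟨a, ⟨haF, hlt⟩, a, ⟨haF, le_refl a⟩, hx⟩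
      · rintro (hx | ⟨b, ⟨hbF, hbc⟩, a, ⟨haF, hab⟩, hx⟩)
        · exact ⟨c, ⟨hc, le_refl c⟩, hx⟩
        · exact ⟨a, ⟨haF, le_trans hab (le_of_lt hbc)⟩, hx⟩
    rw [hdec]
    have hdisjc : Disjoint (span K (sA c))
        (span K (⋃ x ∈ ((F.filter (· < c) : Finset (Submodule K V)) :
          Set (Submodule K V)), sBdef F sA x)) := by
      rw [hspanU]
      exact hdisj c
    constructor
    · rw [Submodule.span_union, hspanU]
      exact hspan c
    · exact LinearIndepOn.id_union (hind c) hindU hdisjc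
end Construction
section NormalForm
variable {K V : Type*} [Field K] [AddCommGroup V] [Module K V] {n : ℕ}

/-- Meet of a finite set of the given subspaces. -/
def mDef (X : Fin n → Submodule K V) (S : Finset (Fin n)) : Submodule K V := S.inf X

/-- Join of meets: the normal form for elements of the generated distributive lattice. -/
def fDef (X : Fin n → Submodule K V) (𝒮 : Finset (Finset (Fin n))) : Submodule K V :=
  𝒮.sup (mDef X)

/-- The finite set of all normal forms. -/
noncomputable def FDef (X : Fin n → Submodule K V) : Finset (Submodule K V) :=
  Finset.image (fDef X) Finset.univ

lemma fDef_mem (X : Fin n → Submodule K V) (𝒮 : Finset (Finset (Fin n))) :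
    fDef X 𝒮 ∈ FDef X :=
  Finset.mem_image_of_mem (fDef X) (Finset.mem_univ 𝒮)

lemma mem_FDef {X : Fin n → Submodule K V} {a : Submodule K V} (h : a ∈ FDef X) :
    ∃ 𝒮, fDef X 𝒮 = a := by
  obtain ⟨𝒮, -, h⟩ := Finset.mem_image.1 h
  exact ⟨𝒮, h⟩

lemma fDef_empty (X : Fin n → Submodule K V) : fDef X ∅ = ⊥ := Finset.sup_empty

lemma fDef_insert (X : Fin n → Submodule K V) (S : Finset (Fin n))
    (𝒮 : Finset (Finset (Fin n))) : fDef X (insert S 𝒮) = mDef X S ⊔ fDef X 𝒮 :=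
  Finset.sup_insert

lemma fDef_singleton (X : Fin n → Submodule K V) (S : Finset (Fin n)) :
    fDef X {S} = mDef X S := Finset.sup_singleton

lemma mDef_mem (X : Fin n → Submodule K V) (S : Finset (Fin n)) : mDef X S ∈ FDef X := by
  rw [← fDef_singleton X S]; exact fDef_mem X _

lemma bot_mem_FDef (X : Fin n → Submodule K V) : ⊥ ∈ FDef X := by
  rw [← fDef_empty X]; exact fDef_mem X _

lemma top_mem_FDef (X : Fin n → Submodule K V) : ⊤ ∈ FDef X := by
  have : mDef X ∅ = ⊤ := Finset.inf_empty
  rw [← this]; exact mDef_mem X _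

lemma X_mem_FDef (X : Fin n → Submodule K V) (i : Fin n) : X i ∈ FDef X := by
  have : mDef X {i} = X i := Finset.inf_singleton
  rw [← this]; exact mDef_mem X _

lemma sup_mem_FDef (X : Fin n → Submodule K V) {a b : Submodule K V}
    (ha : a ∈ FDef X) (hb : b ∈ FDef X) : a ⊔ b ∈ FDef X := by
  obtain ⟨𝒮, rfl⟩ := mem_FDef ha
  obtain ⟨𝒯, rfl⟩ := mem_FDef hb
  have : fDef X (𝒮 ∪ 𝒯) = fDef X 𝒮 ⊔ fDef X 𝒯 := Finset.sup_union
  rw [← this]; exact fDef_mem X _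

lemma latGen_mDef (X : Fin n → Submodule K V) (S : Finset (Fin n)) (hS : S.Nonempty) :
    LatGen (Set.range X) (mDef X S) := by
  induction hS using Finset.Nonempty.cons_induction with
  | singleton i =>
    have : mDef X {i} = X i := Finset.inf_singleton
    rw [this]; exact LatGen.base ⟨i, rfl⟩
  | cons i S hi hS ih =>
    have : mDef X (Finset.cons i S hi) = X i ⊓ mDef X S := Finset.inf_cons hi
    rw [this]; exact LatGen.inf (LatGen.base ⟨i, rfl⟩) ih

lemma gen_FDef (X : Fin n → Submodule K V) :
    ∀ a ∈ FDef X, a = ⊥ ∨ a = ⊤ ∨ LatGen (Set.range X) a := by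
  intro a ha
  obtain ⟨𝒮, rfl⟩ := mem_FDef ha
  clear ha
  induction 𝒮 using Finset.induction_on with
  | empty => exact Or.inl (fDef_empty X)
  | @insert S 𝒮 hS ih =>
    rw [fDef_insert]
    rcases S.eq_empty_or_nonempty with rfl | hSne
    · have : mDef X ∅ = ⊤ := Finset.inf_empty
      rw [this, top_sup_eq]
      exact Or.inr (Or.inl rfl)
    · have hmS := latGen_mDef X S hSne
      rcases ih with h | h | h
      · rw [h, sup_bot_eq]; exact Or.inr (Or.inr hmS)
      · rw [h, sup_top_eq]; exact Or.inr (Or.inl rfl)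
      · exact Or.inr (Or.inr (LatGen.sup hmS h))

lemma distrib_FDef (X : Fin n → Submodule K V)
    (hdist : ∀ a b c : Submodule K V,
      LatGen (Set.range X) a → LatGen (Set.range X) b → LatGen (Set.range X) c →
        a ⊓ (b ⊔ c) = (a ⊓ b) ⊔ (a ⊓ c)) :
    ∀ a, a ∈ FDef X → ∀ b, b ∈ FDef X → ∀ c, c ∈ FDef X →
      a ⊓ (b ⊔ c) = (a ⊓ b) ⊔ (a ⊓ c) := by
  intro a ha b hb c hc
  rcases gen_FDef X a ha with rfl | rfl | ha' <;>
    rcases gen_FDef X b hb with rfl | rfl | hb' <;>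
      rcases gen_FDef X c hc with rfl | rfl | hc' <;>
        first
          | simp
          | simp [sup_comm]
          | exact hdist _ _ _ ha' hb' hc'

lemma inf_mem_FDef (X : Fin n → Submodule K V)
    (hd : ∀ a, a ∈ FDef X → ∀ b, b ∈ FDef X → ∀ c, c ∈ FDef X →
      a ⊓ (b ⊔ c) = (a ⊓ b) ⊔ (a ⊓ c)) :
    ∀ a, a ∈ FDef X → ∀ b, b ∈ FDef X → a ⊓ b ∈ FDef X := by
  have claim1 : ∀ (T : Finset (Fin n)) (𝒮 : Finset (Finset (Fin n))),
      fDef X 𝒮 ⊓ mDef X T ∈ FDef X := by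
    intro T 𝒮
    induction 𝒮 using Finset.induction_on with
    | empty =>
      rw [fDef_empty, bot_inf_eq]; exact bot_mem_FDef X
    | @insert S 𝒮 hS ih =>
      rw [fDef_insert, inf_comm,
        hd (mDef X T) (mDef_mem X T) (mDef X S) (mDef_mem X S) (fDef X 𝒮) (fDef_mem X 𝒮)]
      have h1 : mDef X T ⊓ mDef X S = mDef X (T ∪ S) := (Finset.inf_union).symm
      rw [h1, inf_comm (mDef X T) (fDef X 𝒮)]
      exact sup_mem_FDef X (mDef_mem X (T ∪ S)) ih
  intro a ha b hb
  obtain ⟨𝒮, rfl⟩ := mem_FDef ha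
  obtain ⟨𝒯, rfl⟩ := mem_FDef hb
  clear ha hb
  induction 𝒯 using Finset.induction_on with
  | empty => rw [fDef_empty, inf_bot_eq]; exact bot_mem_FDef X
  | @insert T 𝒯 hT ih =>
    rw [fDef_insert,
      hd (fDef X 𝒮) (fDef_mem X 𝒮) (mDef X T) (mDef_mem X T) (fDef X 𝒯) (fDef_mem X 𝒯)]
    exact sup_mem_FDef X (claim1 T 𝒮) ih

end NormalForm
/-- Proposition: for a finite collection `X₁, …, Xₙ` of subspaces of a vector space `V`,
the following are equivalent:
(i) the sublattice of subspaces generated by the `Xᵢ` (under `∩` and `+`) is distributive;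
(ii) there is a basis `s` of `V` such that each `Xᵢ` is spanned by a subset of `s`;
(iii) there is a basis `s` of `V` such that `s ∩ Xᵢ` is a basis of `Xᵢ` for each `i`. -/
theorem stmt15 {K V : Type*} [Field K] [AddCommGroup V] [Module K V]
    {n : ℕ} (X : Fin n → Submodule K V) :
    -- (i) ↔ (ii)
    ((∀ a b c : Submodule K V,
        LatGen (Set.range X) a → LatGen (Set.range X) b → LatGen (Set.range X) c →
          a ⊓ (b ⊔ c) = (a ⊓ b) ⊔ (a ⊓ c)) ↔
      (∃ s : Set V, LinearIndependent K (Subtype.val : s → V) ∧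
        Submodule.span K s = ⊤ ∧
        ∀ i : Fin n, ∃ t : Set V, t ⊆ s ∧ X i = Submodule.span K t)) ∧
    -- (ii) ↔ (iii)
    ((∃ s : Set V, LinearIndependent K (Subtype.val : s → V) ∧
        Submodule.span K s = ⊤ ∧
        ∀ i : Fin n, ∃ t : Set V, t ⊆ s ∧ X i = Submodule.span K t) ↔
      (∃ s : Set V, LinearIndependent K (Subtype.val : s → V) ∧
        Submodule.span K s = ⊤ ∧
        ∀ i : Fin n,
          LinearIndependent K (Subtype.val : (s ∩ (X i : Set V) : Set V) → V) ∧
          Submodule.span K (s ∩ (X i : Set V)) = X i)) := by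
  constructor
  · constructor
    · -- (i) → (ii)
      intro hdist
      have hd := distrib_FDef X hdist
      have hinf := inf_mem_FDef X hd
      have hsup : ∀ a, a ∈ FDef X → ∀ b, b ∈ FDef X → a ⊔ b ∈ FDef X :=
        fun a ha b hb => sup_mem_FDef X ha hb
      have hble : ∀ c : Submodule K V, ((FDef X).filter (· < c)).sup id ≤ c :=
        fun c => Finset.sup_le fun b hb => le_of_lt (Finset.mem_filter.1 hb).2
      choose sA hsub hind hdisj hspan using fun c : Submodule K V =>
        exists_rel_basis (((FDef X).filter (· < c)).sup id) c (hble c)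
      have H := key_construction (FDef X) (bot_mem_FDef X) hsup hinf hd sA hind hdisj hspan
      refine ⟨sBdef (FDef X) sA ⊤, (H ⊤ (top_mem_FDef X)).2, (H ⊤ (top_mem_FDef X)).1,
        fun i => ?_⟩
      exact ⟨sBdef (FDef X) sA (X i), sBdef_mono _ _ le_top,
        ((H (X i) (X_mem_FDef X i)).1).symm⟩
    · -- (ii) → (i)
      rintro ⟨s, hsi, -, hX⟩
      have key : ∀ a, LatGen (Set.range X) a →
          ∃ t : Set V, t ⊆ s ∧ a = Submodule.span K t := by
        intro a ha
        induction ha with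
        | base h =>
          obtain ⟨i, rfl⟩ := h
          exact hX i
        | inf ha hb iha ihb =>
          obtain ⟨t, hts, rfl⟩ := iha
          obtain ⟨u, hus, rfl⟩ := ihb
          exact ⟨t ∩ u, Set.inter_subset_left.trans hts,
            span_inter_of_indep hsi hts hus⟩
        | sup ha hb iha ihb =>
          obtain ⟨t, hts, rfl⟩ := iha
          obtain ⟨u, hus, rfl⟩ := ihb
          exact ⟨t ∪ u, Set.union_subset hts hus, (Submodule.span_union t u).symm⟩
      intro a b c ha hb hc
      obtain ⟨ta, hta, rfl⟩ := key a ha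
      obtain ⟨tb, htb, rfl⟩ := key b hb
      obtain ⟨tc, htc, rfl⟩ := key c hc
      rw [← Submodule.span_union, span_inter_of_indep hsi hta (Set.union_subset htb htc),
        Set.inter_union_distrib_left, Submodule.span_union,
        ← span_inter_of_indep hsi hta htb, ← span_inter_of_indep hsi hta htc]
  · constructor
    · -- (ii) → (iii)
      rintro ⟨s, hsi, hsp, hX⟩
      refine ⟨s, hsi, hsp, fun i => ?_⟩
      obtain ⟨t, hts, hXi⟩ := hX i
      refine ⟨LinearIndepOn.mono (v := id) hsi Set.inter_subset_left, ?_⟩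
      have ht' : t ⊆ s ∩ (X i : Set V) := fun x hx =>
        ⟨hts hx, show x ∈ X i by rw [hXi]; exact Submodule.subset_span hx⟩
      refine le_antisymm (Submodule.span_le.2 Set.inter_subset_right) ?_
      calc X i = Submodule.span K t := hXi
        _ ≤ Submodule.span K (s ∩ (X i : Set V)) := Submodule.span_mono ht'
    · -- (iii) → (ii)
      rintro ⟨s, hsi, hsp, hX⟩
      exact ⟨s, hsi, hsp, fun i =>
        ⟨s ∩ (X i : Set V), Set.inter_subset_left, ((hX i).2).symm⟩⟩
end

section
/- Let F = K⟨x_1, …, x_n⟩ be the free associative algebra over a field K and let I be a two-sided ideal of F generated by finitely many elements b_1, …, b_m ∈ F_{≥1}. Then for all integers s ≥ 0, g ≥ 1, h ≥ 0 and all j ≥ 2 + s + h, the j-th homogeneous component of the subspace F_{≥1}^s I^g F_{≥1}^h satisfies (F_{≥1}^s I^g F_{≥1}^h)_j = F_s (I^g)_{j−s−h} F_h. -/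
noncomputable section

/-- The sublattice generated by `X` is distributive. -/
def LatDistrib {α : Type*} [Lattice α] (X : Set α) : Prop :=
  ∀ a b c : α, LatGen X a → LatGen X b → LatGen X c →
    a ⊓ (b ⊔ c) = (a ⊓ b) ⊔ (a ⊓ c)

variable (K : Type*) [Field K] (n : ℕ)

/-- The degree-`j` homogeneous component `F_j` of the free algebra
`F = K⟨x₁,…,xₙ⟩`: the span of the words of length `j`. -/
def freeGrade (j : ℕ) : Submodule K (FreeAlgebra K (Fin n)) :=
  (Submodule.span K (Set.range (FreeAlgebra.ι K (X := Fin n)))) ^ j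

/-- `F_{≥1} = ⊕_{j ≥ 1} F_j`. -/
def freePos : Submodule K (FreeAlgebra K (Fin n)) :=
  ⨆ j : ℕ, ⨆ _ : 1 ≤ j, freeGrade K n j

/-- `H_g`: the space of degree-`g` homogeneous components of elements of `H`. -/
def homComp (H : Submodule K (FreeAlgebra K (Fin n))) (g : ℕ) :
    Submodule K (FreeAlgebra K (Fin n)) :=
  Submodule.span K {a | a ∈ freeGrade K n g ∧
    ∃ p ∈ H, p - a ∈ ⨆ j : ℕ, ⨆ _ : j ≠ g, freeGrade K n j}

/-- The two-sided ideal `I = ⟨b_i⟩` of `F`, as a `K`-subspace. -/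
def idealSpan {ι : Type*} (b : ι → FreeAlgebra K (Fin n)) :
    Submodule K (FreeAlgebra K (Fin n)) :=
  Submodule.span K
    {u | ∃ (f g : FreeAlgebra K (Fin n)) (i : ι), u = f * b i * g}

/-- The generators `{F_{≥1}^s I^g F_{≥1}^h}` of the lattice `L(B)`, `B = F/I`. -/
def latLGens {ι : Type*} (b : ι → FreeAlgebra K (Fin n)) :
    Set (Submodule K (FreeAlgebra K (Fin n))) :=
  {U | ∃ s g h : ℕ,
    U = freePos K n ^ s * idealSpan K n b ^ g * freePos K n ^ h}

/-- The generators `{F_s I_g F_h | s+g+h = j, g ≥ 2}` of the lattice `L_j(B)`. -/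
def latJGens {ι : Type*} (b : ι → FreeAlgebra K (Fin n)) (j : ℕ) :
    Set (Submodule K (FreeAlgebra K (Fin n))) :=
  {U | ∃ s g h : ℕ, 2 ≤ g ∧ s + g + h = j ∧
    U = freeGrade K n s * homComp K n (idealSpan K n b) g * freeGrade K n h}

end

set_option maxHeartbeats 1000000
set_option synthInstance.maxHeartbeats 200000

noncomputable section AuxProof

variable (K : Type*) [Field K] (n : ℕ)

open DirectSum

instance freeGrade.gradedMonoid : SetLike.GradedMonoid (freeGrade K n) :=
  show SetLike.GradedMonoid
    (fun i : ℕ => (Submodule.span K (Set.range (FreeAlgebra.ι K (X := Fin n)))) ^ i) from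
  inferInstance

def freeGradeIota (v : Fin n) : ⨁ i : ℕ, freeGrade K n i :=
  DirectSum.of (fun i => freeGrade K n i) 1
    ⟨FreeAlgebra.ι K v, by
      rw [freeGrade, pow_one]; exact Submodule.subset_span ⟨v, rfl⟩⟩

def freeGradeDecompAux : FreeAlgebra K (Fin n) →ₐ[K] ⨁ i : ℕ, freeGrade K n i :=
  FreeAlgebra.lift K (freeGradeIota K n)

def freeGradeLof :
    (Submodule.span K (Set.range (FreeAlgebra.ι K (X := Fin n)))) →ₗ[K]
      ⨁ i : ℕ, freeGrade K n i :=
  (DirectSum.lof K ℕ (fun i => freeGrade K n i) 1).comp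
    ((Submodule.subtype _).codRestrict (freeGrade K n 1) (fun x => by
      rw [freeGrade, pow_one]; exact x.2))

lemma freeGradeDecompAux_span (m : FreeAlgebra K (Fin n))
    (hm : m ∈ Submodule.span K (Set.range (FreeAlgebra.ι K (X := Fin n)))) :
    freeGradeDecompAux K n m = freeGradeLof K n ⟨m, hm⟩ := by
  induction hm using Submodule.span_induction with
  | mem x hx =>
      obtain ⟨v, rfl⟩ := hx
      simp only [freeGradeDecompAux, FreeAlgebra.lift_ι_apply, freeGradeIota, freeGradeLof,
        LinearMap.comp_apply, DirectSum.lof_eq_of]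
      rfl
  | zero => rw [map_zero]; exact (map_zero (freeGradeLof K n)).symm
  | add x y hx hy ihx ihy =>
      rw [map_add, ihx, ihy, ← map_add]
      rfl
  | smul c x hx ih =>
      rw [map_smul, ih, ← map_smul]
      rfl

lemma freeGradeDecompAux_pow (i : ℕ) (x : FreeAlgebra K (Fin n))
    (hx : x ∈ (Submodule.span K (Set.range (FreeAlgebra.ι K (X := Fin n)))) ^ i) :
    freeGradeDecompAux K n x = DirectSum.of (fun i => freeGrade K n i) i ⟨x, hx⟩ := by
  induction hx using Submodule.pow_induction_on_left' with
  | algebraMap r =>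
      rw [AlgHom.commutes, DirectSum.algebraMap_apply]; rfl
  | add x y i hx hy ihx ihy =>
      rw [map_add, ihx, ihy, ← AddMonoidHom.map_add]
      rfl
  | mem_mul m hm i x hx ih =>
      rw [map_mul, ih, freeGradeDecompAux_span K n m hm, freeGradeLof,
        LinearMap.comp_apply, DirectSum.lof_eq_of, DirectSum.of_mul_of]
      apply DirectSum.of_eq_of_gradedMonoid_eq
      exact Sigma.subtype_ext (add_comm 1 i) rfl

instance freeGrade.gradedAlgebra : GradedAlgebra (freeGrade K n) := by
  refine GradedAlgebra.ofAlgHom _ (freeGradeDecompAux K n) ?_ ?_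
  · ext v
    simp [freeGradeDecompAux, freeGradeIota]
  · intro i x
    exact freeGradeDecompAux_pow K n i x x.2

/-! ### The projection maps -/

def projL (j : ℕ) : FreeAlgebra K (Fin n) →ₗ[K] FreeAlgebra K (Fin n) :=
  (freeGrade K n j).subtype.comp
    ((DirectSum.component K ℕ (fun i => freeGrade K n i) j).comp
      (DirectSum.decomposeLinearEquiv (freeGrade K n)).toLinearMap)

@[simp] lemma projL_apply (j : ℕ) (x : FreeAlgebra K (Fin n)) :
    projL K n j x = (DirectSum.decompose (freeGrade K n) x j : FreeAlgebra K (Fin n)) := rfl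

lemma projL_mem (j : ℕ) (x : FreeAlgebra K (Fin n)) :
    projL K n j x ∈ freeGrade K n j := SetLike.coe_mem _

lemma projL_of_mem_same {j : ℕ} {x : FreeAlgebra K (Fin n)} (hx : x ∈ freeGrade K n j) :
    projL K n j x = x := DirectSum.decompose_of_mem_same _ hx

lemma projL_of_mem_ne {i j : ℕ} {x : FreeAlgebra K (Fin n)} (hx : x ∈ freeGrade K n i)
    (hij : i ≠ j) : projL K n j x = 0 := DirectSum.decompose_of_mem_ne _ hx hij

lemma sub_projL_mem (g : ℕ) (x : FreeAlgebra K (Fin n)) :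
    x - projL K n g x ∈ ⨆ j : ℕ, ⨆ _ : j ≠ g, freeGrade K n j := by
  classical
  have hx := DirectSum.sum_support_decompose (freeGrade K n) x
  have key : x - projL K n g x =
      ∑ i ∈ ((DirectSum.decompose (freeGrade K n) x).support.erase g),
        (DirectSum.decompose (freeGrade K n) x i : FreeAlgebra K (Fin n)) := by
    by_cases hg : g ∈ (DirectSum.decompose (freeGrade K n) x).support
    · rw [← Finset.add_sum_erase _ _ hg] at hx
      rw [projL_apply, sub_eq_iff_eq_add']
      exact hx.symm
    · have h0 : projL K n g x = 0 := by
        rw [projL_apply, DFinsupp.notMem_support_iff.mp hg]; rfl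
      rw [Finset.erase_eq_of_notMem hg, h0, sub_zero]
      exact hx.symm
  rw [key]
  exact Submodule.sum_mem _ fun i hi =>
    Submodule.mem_iSup_of_mem i
      (Submodule.mem_iSup_of_mem (Finset.ne_of_mem_erase hi) (SetLike.coe_mem _))

lemma homComp_eq_map (H : Submodule K (FreeAlgebra K (Fin n))) (g : ℕ) :
    homComp K n H g = Submodule.map (projL K n g) H := by
  have hker : (⨆ j : ℕ, ⨆ _ : j ≠ g, freeGrade K n j) ≤ LinearMap.ker (projL K n g) :=
    iSup_le fun j => iSup_le fun hj => fun y hy =>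
      LinearMap.mem_ker.2 (projL_of_mem_ne K n hy hj)
  have hset : {a | a ∈ freeGrade K n g ∧
      ∃ p ∈ H, p - a ∈ ⨆ j : ℕ, ⨆ _ : j ≠ g, freeGrade K n j}
      = (projL K n g) '' (H : Set (FreeAlgebra K (Fin n))) := by
    ext a
    constructor
    · rintro ⟨hag, p, hp, hsub⟩
      refine ⟨p, hp, ?_⟩
      have h0 : projL K n g p - projL K n g a = 0 := by
        rw [← map_sub]; exact hker hsub
      rw [sub_eq_zero] at h0
      rw [h0, projL_of_mem_same K n hag]
    · rintro ⟨p, hp, rfl⟩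
      exact ⟨projL_mem K n g p, p, hp, sub_projL_mem K n g p⟩
  rw [homComp, hset, ← Submodule.map_span, Submodule.span_eq]

lemma projL_mul (j : ℕ) (x y : FreeAlgebra K (Fin n)) :
    projL K n j (x * y) =
      ∑ k ∈ Finset.range (j + 1), projL K n k x * projL K n (j - k) y := by
  refine DirectSum.Decomposition.inductionOn (freeGrade K n)
    (motive := fun x => projL K n j (x * y) =
      ∑ k ∈ Finset.range (j + 1), projL K n k x * projL K n (j - k) y) ?_ ?_ ?_ x
  · simp
  · intro i m
    by_cases hij : i ≤ j
    · rw [projL_apply, DirectSum.coe_decompose_mul_of_left_mem_of_le _ m.2 hij,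
        Finset.sum_eq_single i
          (fun k _ hki => by rw [projL_of_mem_ne K n m.2 (Ne.symm hki), zero_mul])
          (fun hi => absurd (Finset.mem_range.2 (by omega)) hi),
        projL_of_mem_same K n m.2]
      rfl
    · rw [projL_apply, DirectSum.coe_decompose_mul_of_left_mem_of_not_le _ m.2 hij]
      symm
      refine Finset.sum_eq_zero fun k hk => ?_
      rw [projL_of_mem_ne K n m.2 (by rw [Finset.mem_range] at hk; omega), zero_mul]
  · intro a b ha hb
    rw [add_mul, map_add, ha, hb, ← Finset.sum_add_distrib]
    refine Finset.sum_congr rfl fun k _ => ?_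
    rw [map_add, add_mul]
lemma freeGrade_mul (a c : ℕ) :
    freeGrade K n a * freeGrade K n c = freeGrade K n (a + c) :=
  (pow_add (Submodule.span K (Set.range (FreeAlgebra.ι K (X := Fin n)))) a c).symm

lemma freePos_pow_le (s : ℕ) :
    freePos K n ^ s ≤ ⨆ k : ℕ, ⨆ _ : s ≤ k, freeGrade K n k := by
  induction s with
  | zero =>
      rw [pow_zero]
      have h0 : (1 : Submodule K (FreeAlgebra K (Fin n))) = freeGrade K n 0 :=
        (pow_zero _).symm
      rw [h0]
      exact le_iSup₂ (f := fun k (_ : 0 ≤ k) => freeGrade K n k) 0 (le_refl 0)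
  | succ s ih =>
      rw [pow_succ]
      refine le_trans (mul_le_mul' ih le_rfl) ?_
      rw [Submodule.iSup_mul]
      refine iSup_le fun k => ?_
      rw [Submodule.iSup_mul]
      refine iSup_le fun hk => ?_
      rw [freePos, Submodule.mul_iSup]
      refine iSup_le fun j => ?_
      rw [Submodule.mul_iSup]
      refine iSup_le fun hj => ?_
      rw [freeGrade_mul]
      exact le_iSup₂ (f := fun t (_ : s + 1 ≤ t) => freeGrade K n t) (k + j) (by omega)

lemma freeGrade_le_freePos_pow (s : ℕ) : freeGrade K n s ≤ freePos K n ^ s := by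
  induction s with
  | zero => rw [pow_zero, freeGrade, pow_zero]
  | succ s ih =>
      have : freeGrade K n (s + 1) = freeGrade K n s * freeGrade K n 1 := by
        rw [freeGrade_mul]
      rw [this, pow_succ]
      refine mul_le_mul' ih ?_
      exact le_iSup₂ (f := fun j (_ : 1 ≤ j) => freeGrade K n j) 1 (le_refl 1)

lemma projL_eq_zero_of_freePos_pow {s k : ℕ} {x : FreeAlgebra K (Fin n)}
    (hx : x ∈ freePos K n ^ s) (hk : k < s) : projL K n k x = 0 := by
  have hker : (⨆ t : ℕ, ⨆ _ : s ≤ t, freeGrade K n t) ≤ LinearMap.ker (projL K n k) :=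
    iSup_le fun t => iSup_le fun ht => fun y hy =>
      LinearMap.mem_ker.2 (projL_of_mem_ne K n hy (by omega))
  exact hker (freePos_pow_le K n s hx)

/-! ### Ideal lemmas -/

variable {ι' : Type*} (b : ι' → FreeAlgebra K (Fin n))

lemma idealSpan_mul_left (f : FreeAlgebra K (Fin n)) {x : FreeAlgebra K (Fin n)}
    (hx : x ∈ idealSpan K n b) : f * x ∈ idealSpan K n b := by
  induction hx using Submodule.span_induction with
  | mem u hu =>
      obtain ⟨p, q, i, rfl⟩ := hu
      exact Submodule.subset_span ⟨f * p, q, i, by rw [mul_assoc, mul_assoc, mul_assoc]⟩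
  | zero => rw [mul_zero]; exact zero_mem _
  | add x y hx hy ihx ihy => rw [mul_add]; exact add_mem ihx ihy
  | smul c x hx ih => rw [mul_smul_comm]; exact Submodule.smul_mem _ c ih

lemma idealSpan_mul_right (f : FreeAlgebra K (Fin n)) {x : FreeAlgebra K (Fin n)}
    (hx : x ∈ idealSpan K n b) : x * f ∈ idealSpan K n b := by
  induction hx using Submodule.span_induction with
  | mem u hu =>
      obtain ⟨p, q, i, rfl⟩ := hu
      exact Submodule.subset_span ⟨p, q * f, i, by rw [mul_assoc, mul_assoc]⟩
  | zero => rw [zero_mul]; exact zero_mem _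
  | add x y hx hy ihx ihy => rw [add_mul]; exact add_mem ihx ihy
  | smul c x hx ih => rw [smul_mul_assoc]; exact Submodule.smul_mem _ c ih

lemma idealSpan_pow_mul_left {g : ℕ} (hg : 1 ≤ g) (f : FreeAlgebra K (Fin n))
    {x : FreeAlgebra K (Fin n)} (hx : x ∈ idealSpan K n b ^ g) :
    f * x ∈ idealSpan K n b ^ g := by
  obtain ⟨g', rfl⟩ : ∃ g', g = g' + 1 := ⟨g - 1, by omega⟩
  rw [pow_succ'] at hx ⊢
  refine Submodule.mul_induction_on (C := fun x => f * x ∈ idealSpan K n b * idealSpan K n b ^ g')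
    hx (fun m hm y hy => ?_) (fun a c ha hc => ?_)
  · show f * (m * y) ∈ _
    rw [← mul_assoc]
    exact Submodule.mul_mem_mul (idealSpan_mul_left K n b f hm) hy
  · show f * (a + c) ∈ _
    rw [mul_add]; exact add_mem ha hc

lemma idealSpan_pow_mul_right {g : ℕ} (hg : 1 ≤ g) (f : FreeAlgebra K (Fin n))
    {x : FreeAlgebra K (Fin n)} (hx : x ∈ idealSpan K n b ^ g) :
    x * f ∈ idealSpan K n b ^ g := by
  obtain ⟨g', rfl⟩ : ∃ g', g = g' + 1 := ⟨g - 1, by omega⟩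
  rw [pow_succ] at hx ⊢
  refine Submodule.mul_induction_on (C := fun x => x * f ∈ idealSpan K n b ^ g' * idealSpan K n b)
    hx (fun m hm y hy => ?_) (fun a c ha hc => ?_)
  · show m * y * f ∈ _
    rw [mul_assoc]
    exact Submodule.mul_mem_mul hm (idealSpan_mul_right K n b f hy)
  · show (a + c) * f ∈ _
    rw [add_mul]; exact add_mem ha hc

/-! ### Shift lemmas -/

lemma projL_mul_left_mem {e d : ℕ} {x p : FreeAlgebra K (Fin n)}
    (hx : x ∈ freeGrade K n e) :
    projL K n (e + d) (x * p) = x * projL K n d p := by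
  simpa using DirectSum.coe_decompose_mul_add_of_left_mem (freeGrade K n) (b := p) hx

lemma projL_mul_right_mem {e d : ℕ} {x p : FreeAlgebra K (Fin n)}
    (hx : x ∈ freeGrade K n e) :
    projL K n (d + e) (p * x) = projL K n d p * x := by
  simpa using DirectSum.coe_decompose_mul_add_of_right_mem (freeGrade K n) (a := p) hx
lemma tripleShift (e d e' : ℕ) {g : ℕ} (hg : 1 ≤ g) :
    freeGrade K n e * Submodule.map (projL K n d) (idealSpan K n b ^ g) * freeGrade K n e' ≤
      Submodule.map (projL K n (e + d + e')) (idealSpan K n b ^ g) := by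
  refine Submodule.mul_le.2 fun z hz w hw => ?_
  refine Submodule.mul_induction_on
    (C := fun z => z * w ∈ Submodule.map (projL K n (e + d + e')) (idealSpan K n b ^ g)) hz
    (fun x hx y hy => ?_) (fun a c ha hc => ?_)
  · obtain ⟨p, hp, rfl⟩ := hy
    refine ⟨x * p * w, ?_, ?_⟩
    · exact idealSpan_pow_mul_right K n b hg w (idealSpan_pow_mul_left K n b hg x hp)
    · show projL K n (e + d + e') (x * p * w) = x * projL K n d p * w
      rw [projL_mul_right_mem K n hw, projL_mul_left_mem K n hx]
  · show (a + c) * w ∈ _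
    rw [add_mul]; exact add_mem ha hc

lemma main_le (s h j : ℕ) {g : ℕ} (hg : 1 ≤ g) :
    Submodule.map (projL K n j) (freePos K n ^ s * idealSpan K n b ^ g * freePos K n ^ h) ≤
      freeGrade K n s * Submodule.map (projL K n (j - s - h)) (idealSpan K n b ^ g) *
        freeGrade K n h := by
  rintro _ ⟨x, hx, rfl⟩
  refine Submodule.mul_induction_on
    (C := fun x => projL K n j x ∈ freeGrade K n s *
      Submodule.map (projL K n (j - s - h)) (idealSpan K n b ^ g) * freeGrade K n h) hx
    (fun m hm w hw => ?_)
    (fun a c ha hc => by show projL K n j (a + c) ∈ _; rw [map_add]; exact add_mem ha hc)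
  refine Submodule.mul_induction_on
    (C := fun m => projL K n j (m * w) ∈ freeGrade K n s *
      Submodule.map (projL K n (j - s - h)) (idealSpan K n b ^ g) * freeGrade K n h) hm
    (fun u hu a ha => ?_)
    (fun a c h1 h2 => by
      show projL K n j ((a + c) * w) ∈ _
      rw [add_mul, map_add]; exact add_mem h1 h2)
  show projL K n j (u * a * w) ∈ _
  rw [projL_mul]
  refine Submodule.sum_mem _ fun t ht => ?_
  rw [projL_mul, Finset.sum_mul]
  refine Submodule.sum_mem _ fun k hk => ?_
  rw [Finset.mem_range] at ht hk
  by_cases hks : s ≤ k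
  · by_cases hth : h ≤ j - t
    · have h1 : projL K n k u ∈ freeGrade K n s * freeGrade K n (k - s) := by
        rw [freeGrade_mul, show s + (k - s) = k from by omega]
        exact projL_mem K n k u
      have h3 : projL K n (j - t) w ∈ freeGrade K n (j - t - h) * freeGrade K n h := by
        rw [freeGrade_mul, show (j - t - h) + h = j - t from by omega]
        exact projL_mem K n (j - t) w
      have h2 : projL K n (t - k) a ∈
          Submodule.map (projL K n (t - k)) (idealSpan K n b ^ g) :=
        Submodule.mem_map_of_mem ha
      have key : freeGrade K n (k - s) *
            Submodule.map (projL K n (t - k)) (idealSpan K n b ^ g) *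
            freeGrade K n (j - t - h) ≤
          Submodule.map (projL K n (j - s - h)) (idealSpan K n b ^ g) := by
        have h4 := tripleShift K n b (k - s) (t - k) (j - t - h) hg
        rwa [show k - s + (t - k) + (j - t - h) = j - s - h from by omega] at h4
      have hmem := Submodule.mul_mem_mul (Submodule.mul_mem_mul h1 h2) h3
      have hle : (freeGrade K n s * freeGrade K n (k - s)) *
            Submodule.map (projL K n (t - k)) (idealSpan K n b ^ g) *
            (freeGrade K n (j - t - h) * freeGrade K n h) ≤
          freeGrade K n s * Submodule.map (projL K n (j - s - h)) (idealSpan K n b ^ g) *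
            freeGrade K n h := by
        calc (freeGrade K n s * freeGrade K n (k - s)) *
              Submodule.map (projL K n (t - k)) (idealSpan K n b ^ g) *
              (freeGrade K n (j - t - h) * freeGrade K n h)
            = freeGrade K n s * (freeGrade K n (k - s) *
              Submodule.map (projL K n (t - k)) (idealSpan K n b ^ g) *
              freeGrade K n (j - t - h)) * freeGrade K n h := by
              simp only [mul_assoc]
          _ ≤ _ := mul_le_mul' (mul_le_mul' le_rfl key) le_rfl
      exact hle hmem
    · rw [projL_eq_zero_of_freePos_pow K n hw (by omega), mul_zero]
      exact zero_mem _
  · rw [projL_eq_zero_of_freePos_pow K n hu (by omega), zero_mul, zero_mul]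
    exact zero_mem _

lemma main_ge (s h d : ℕ) {g : ℕ} :
    freeGrade K n s * Submodule.map (projL K n d) (idealSpan K n b ^ g) * freeGrade K n h ≤
      Submodule.map (projL K n (s + d + h))
        (freePos K n ^ s * idealSpan K n b ^ g * freePos K n ^ h) := by
  refine Submodule.mul_le.2 fun z hz w hw => ?_
  refine Submodule.mul_induction_on
    (C := fun z => z * w ∈ Submodule.map (projL K n (s + d + h))
      (freePos K n ^ s * idealSpan K n b ^ g * freePos K n ^ h)) hz
    (fun f hf y hy => ?_) (fun a c ha hc => ?_)
  · obtain ⟨p, hp, rfl⟩ := hy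
    refine ⟨f * p * w, ?_, ?_⟩
    · exact Submodule.mul_mem_mul
        (Submodule.mul_mem_mul (freeGrade_le_freePos_pow K n s hf) hp)
        (freeGrade_le_freePos_pow K n h hw)
    · show projL K n (s + d + h) (f * p * w) = f * projL K n d p * w
      rw [projL_mul_right_mem K n hw, projL_mul_left_mem K n hf]
  · show (a + c) * w ∈ _
    rw [add_mul]; exact add_mem ha hc


end AuxProof

/-- Lemma (Step 2 of Theorem on `L(B)`): for `I = ⟨b₁,…,b_m⟩` with `b_i ∈ F_{≥1}`,
`s, h ≥ 0`, `g ≥ 1` and `j ≥ 2 + s + h`, one has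
`(F_{≥1}^s I^g F_{≥1}^h)_j = F_s (I^g)_{j-s-h} F_h`. -/
theorem stmt17 {K : Type*} [Field K] {n m : ℕ}
    (b : Fin m → FreeAlgebra K (Fin n)) (hb : ∀ i, b i ∈ freePos K n) :
    ∀ s g h j : ℕ, 1 ≤ g → 2 + s + h ≤ j →
      homComp K n (freePos K n ^ s * idealSpan K n b ^ g * freePos K n ^ h) j =
        freeGrade K n s * homComp K n (idealSpan K n b ^ g) (j - s - h) *
          freeGrade K n h := by
  intro s g h j hg hj
  rw [homComp_eq_map, homComp_eq_map]
  apply le_antisymm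
  · exact main_le K n b s h j hg
  · have h2 := main_ge K n b s h (j - s - h) (g := g)
    rwa [show s + (j - s - h) + h = j from by omega] at h2
end
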